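/- arXiv:2003.04314 — 3 statements merged into one kernel-verified Lean document; each statement's English description precedes it below -/
import Mathlib

section
/- For all natural numbers k ≤ l, the covariance and second-order product moment of the generation sizes satisfy Cov(Z_k, Z_l) = μ^l · Σ_{j=0}^{k−1} μ^j and E[Z_k Z_l] = μ^l · Σ_{j=0}^{k} μ^j; in particular, when μ ≠ 1, Cov(Z_k, Z_l) = μ^l (1 − μ^k)/(1 − μ) and E[Z_k Z_l] = μ^l (1 − μ^{k+1})/(1 − μ). -/
open MeasureTheory ProbabilityTheory
open scoped ENNReal NNReal

namespace GWaux

lemma pois_hasSum_one {μ : ℝ} (hμ : 0 < μ) :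
    HasSum (fun n : ℕ => Real.exp (-μ) * μ ^ n / n.factorial) 1 := by
  have := ProbabilityTheory.poissonPMFRealSum μ.toNNReal
  simpa [ProbabilityTheory.poissonPMFReal, Real.coe_toNNReal μ hμ.le] using this

lemma pois_hasSum_mean {μ : ℝ} (hμ : 0 < μ) :
    HasSum (fun n : ℕ => (n : ℝ) * (Real.exp (-μ) * μ ^ n / n.factorial)) μ := by
  have h1 : HasSum (fun n : ℕ =>
      ((n + 1 : ℕ) : ℝ) * (Real.exp (-μ) * μ ^ (n + 1) / (n + 1).factorial)) μ := by
    have h0 := (pois_hasSum_one hμ).mul_left μ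
    rw [mul_one] at h0
    convert h0 using 2 with n
    case e'_3 => rfl
    have hfac : ((n.factorial : ℝ)) ≠ 0 := Nat.cast_ne_zero.mpr n.factorial_ne_zero
    have hn1 : ((n : ℝ) + 1) ≠ 0 := by positivity
    rw [Nat.factorial_succ]
    push_cast
    field_simp
    ring
  have := (hasSum_nat_add_iff (f := fun n : ℕ =>
      (n : ℝ) * (Real.exp (-μ) * μ ^ n / n.factorial)) 1).mp h1
  simpa using this

lemma pois_hasSum_sq {μ : ℝ} (hμ : 0 < μ) :
    HasSum (fun n : ℕ => (n : ℝ) ^ 2 * (Real.exp (-μ) * μ ^ n / n.factorial)) (μ + μ ^ 2) := by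
  have h2 : HasSum (fun n : ℕ =>
      ((n + 2 : ℕ) : ℝ) * (((n + 2 : ℕ) : ℝ) - 1) *
        (Real.exp (-μ) * μ ^ (n + 2) / (n + 2).factorial)) (μ ^ 2) := by
    have h0 := (pois_hasSum_one hμ).mul_left (μ ^ 2)
    rw [mul_one] at h0
    convert h0 using 2 with n
    case e'_3 => rfl
    have hfac : ((n.factorial : ℝ)) ≠ 0 := Nat.cast_ne_zero.mpr n.factorial_ne_zero
    have hn1 : ((n : ℝ) + 1) ≠ 0 := by positivity
    have hn2 : ((n : ℝ) + 2) ≠ 0 := by positivity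
    rw [Nat.factorial_succ, Nat.factorial_succ]
    push_cast
    field_simp
    ring
  have hg : HasSum (fun n : ℕ =>
      (n : ℝ) * ((n : ℝ) - 1) * (Real.exp (-μ) * μ ^ n / n.factorial)) (μ ^ 2) := by
    have := (hasSum_nat_add_iff (f := fun n : ℕ =>
        (n : ℝ) * ((n : ℝ) - 1) * (Real.exp (-μ) * μ ^ n / n.factorial)) 2).mp h2
    simpa [Finset.sum_range_succ] using this
  have h := hg.add (pois_hasSum_mean hμ)
  rw [add_comm (μ ^ 2) μ] at h
  convert h using 2 with n
  ring


variable {Ω : Type*} [MeasurableSpace Ω]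

lemma lintegral_comp_nat {P : Measure Ω} (X : Ω → ℕ) (hX : Measurable X) (F : ℕ → ℝ≥0∞) :
    ∫⁻ ω, F (X ω) ∂P = ∑' n, F n * P {ω | X ω = n} := by
  rw [← lintegral_map (f := F) measurable_from_top hX, lintegral_countable']
  congr 1; funext n
  rw [Measure.map_apply hX (measurableSet_singleton n)]
  rfl

lemma lintegral_pois_mean {P : Measure Ω} {μ : ℝ} (hμ : 0 < μ) (X : Ω → ℕ) (hX : Measurable X)
    (hp : ∀ n, P {ω | X ω = n} = ENNReal.ofReal (Real.exp (-μ) * μ ^ n / n.factorial)) :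
    ∫⁻ ω, (X ω : ℝ≥0∞) ∂P = ENNReal.ofReal μ := by
  rw [lintegral_comp_nat X hX (fun n => (n : ℝ≥0∞))]
  have h : ∀ n : ℕ, (n : ℝ≥0∞) * P {ω | X ω = n}
      = ENNReal.ofReal ((n : ℝ) * (Real.exp (-μ) * μ ^ n / n.factorial)) := by
    intro n
    rw [hp n, ← ENNReal.ofReal_natCast n, ← ENNReal.ofReal_mul (by positivity)]
  rw [tsum_congr h, ← ENNReal.ofReal_tsum_of_nonneg (fun n => by positivity)
    (pois_hasSum_mean hμ).summable, (pois_hasSum_mean hμ).tsum_eq]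

lemma lintegral_pois_sq {P : Measure Ω} {μ : ℝ} (hμ : 0 < μ) (X : Ω → ℕ) (hX : Measurable X)
    (hp : ∀ n, P {ω | X ω = n} = ENNReal.ofReal (Real.exp (-μ) * μ ^ n / n.factorial)) :
    ∫⁻ ω, (X ω : ℝ≥0∞) ^ 2 ∂P = ENNReal.ofReal (μ + μ ^ 2) := by
  rw [lintegral_comp_nat X hX (fun n => (n : ℝ≥0∞) ^ 2)]
  have h : ∀ n : ℕ, (n : ℝ≥0∞) ^ 2 * P {ω | X ω = n}
      = ENNReal.ofReal ((n : ℝ) ^ 2 * (Real.exp (-μ) * μ ^ n / n.factorial)) := by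
    intro n
    rw [hp n, ← ENNReal.ofReal_natCast n, ← ENNReal.ofReal_pow (by positivity),
      ← ENNReal.ofReal_mul (by positivity)]
  rw [tsum_congr h, ← ENNReal.ofReal_tsum_of_nonneg (fun n => by positivity)
    (pois_hasSum_sq hμ).summable, (pois_hasSum_sq hμ).tsum_eq]

end GWaux

open GWaux

/-- For `k ≤ l`, covariance and second-order product moment of the generation sizes of a
Galton–Watson process with Poisson(μ) offspring:
`Cov(Z_k, Z_l) = μ^l Σ_{j<k} μ^j` and `E[Z_k Z_l] = μ^l Σ_{j≤k} μ^j`; in particular,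
when `μ ≠ 1`, `Cov(Z_k, Z_l) = μ^l (1-μ^k)/(1-μ)` and
`E[Z_k Z_l] = μ^l (1-μ^{k+1})/(1-μ)`. -/
theorem gw_covariance_productMoment {Ω : Type*} [MeasurableSpace Ω]
    (P : Measure Ω) [IsProbabilityMeasure P]
    (μ : ℝ) (hμ : 0 < μ)
    (ξ : ℕ → ℕ → Ω → ℕ)
    (hmeas : ∀ k i, Measurable (ξ k i))
    (hindep : iIndepFun
      (fun p : ℕ × ℕ => ξ p.1 p.2) P)
    (hpois : ∀ k i n, P {ω | ξ k i ω = n}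
      = ENNReal.ofReal (Real.exp (-μ) * μ ^ n / n.factorial))
    (Z : ℕ → Ω → ℕ)
    (hZ0 : ∀ ω, Z 0 ω = 1)
    (hZrec : ∀ k ω, Z (k + 1) ω = ∑ i ∈ Finset.Icc 1 (Z k ω), ξ k i ω)
    (k l : ℕ) (hkl : k ≤ l) :
    (∫ ω, (Z k ω : ℝ) * (Z l ω : ℝ) ∂P)
        - (∫ ω, (Z k ω : ℝ) ∂P) * (∫ ω, (Z l ω : ℝ) ∂P)
      = μ ^ l * ∑ j ∈ Finset.range k, μ ^ j ∧
    ∫ ω, (Z k ω : ℝ) * (Z l ω : ℝ) ∂P = μ ^ l * ∑ j ∈ Finset.range (k + 1), μ ^ j ∧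
    (μ ≠ 1 →
      (∫ ω, (Z k ω : ℝ) * (Z l ω : ℝ) ∂P)
          - (∫ ω, (Z k ω : ℝ) ∂P) * (∫ ω, (Z l ω : ℝ) ∂P)
        = μ ^ l * (1 - μ ^ k) / (1 - μ) ∧
      ∫ ω, (Z k ω : ℝ) * (Z l ω : ℝ) ∂P = μ ^ l * (1 - μ ^ (k + 1)) / (1 - μ)) := by
  classical
  set ν : ℝ≥0∞ := ENNReal.ofReal μ with hν
  -- the σ-algebras generated by the individual offspring variables
  set s : ℕ × ℕ → MeasurableSpace Ω :=
    fun p => MeasurableSpace.comap (ξ p.1 p.2) inferInstance with hs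
  have hs_le : ∀ p, s p ≤ ‹MeasurableSpace Ω› :=
    fun p => measurable_iff_comap_le.mp (hmeas p.1 p.2)
  have hiI : iIndep s P := hindep
  -- the σ-algebra generated by generations before l
  set m : ℕ → MeasurableSpace Ω :=
    fun l => ⨆ p ∈ {p : ℕ × ℕ | p.1 < l}, s p with hm
  have hm_le : ∀ l, m l ≤ ‹MeasurableSpace Ω› :=
    fun l => iSup₂_le fun p _ => hs_le p
  have hm_mono : ∀ a b : ℕ, a ≤ b → m a ≤ m b := by
    intro a b hab
    exact biSup_mono fun p hp => lt_of_lt_of_le hp hab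
  have hξm : ∀ (l j i : ℕ), j < l → Measurable[m l] (ξ j i) := by
    intro l j i hj
    exact measurable_iff_comap_le.mpr (le_biSup s (show ((j, i) : ℕ × ℕ) ∈ {p : ℕ × ℕ | p.1 < l} from hj))
  have hξs : ∀ j i : ℕ, Measurable[s (j, i)] (ξ j i) := by
    intro j i
    exact measurable_iff_comap_le.mpr le_rfl
  have hξc : ∀ j i : ℕ, Measurable fun ω => (ξ j i ω : ℝ≥0∞) :=
    fun j i => measurable_from_top.comp (hmeas j i)
  -- independence
  have hI1 : ∀ l i : ℕ, Indep (m l) (s (l, i)) P := by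
    intro l i
    have := indep_iSup_of_disjoint hs_le hiI
      (S := {p : ℕ × ℕ | p.1 < l}) (T := {((l, i) : ℕ × ℕ)})
      (hST := by
        rw [Set.disjoint_left]
        intro p hp hp2
        rw [Set.mem_singleton_iff] at hp2
        subst hp2
        exact absurd hp (lt_irrefl l))
    simpa [iSup_singleton, hm] using this
  have hI2 : ∀ l i j : ℕ, j ≠ i →
      Indep (⨆ p ∈ ({p : ℕ × ℕ | p.1 < l} ∪ {((l, i) : ℕ × ℕ)}), s p) (s (l, j)) P := by
    intro l i j hji
    have := indep_iSup_of_disjoint hs_le hiI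
      (S := {p : ℕ × ℕ | p.1 < l} ∪ {((l, i) : ℕ × ℕ)}) (T := {((l, j) : ℕ × ℕ)})
      (hST := by
        rw [Set.disjoint_left]
        intro p hp hp2
        rw [Set.mem_singleton_iff] at hp2
        subst hp2
        rcases hp with hp | hp
        · exact absurd hp (lt_irrefl l)
        · rw [Set.mem_singleton_iff] at hp
          simp only [Prod.mk.injEq] at hp
          exact hji hp.2)
    simpa [iSup_singleton] using this
  have hmean : ∀ l i : ℕ, ∫⁻ ω, (ξ l i ω : ℝ≥0∞) ∂P = ν :=
    fun l i => lintegral_pois_mean hμ (ξ l i) (hmeas l i) (hpois l i)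
  have hsq : ∀ l i : ℕ, ∫⁻ ω, (ξ l i ω : ℝ≥0∞) ^ 2 ∂P = ν * ν + ν := by
    intro l i
    rw [lintegral_pois_sq hμ (ξ l i) (hmeas l i) (hpois l i),
      ENNReal.ofReal_add hμ.le (by positivity), ENNReal.ofReal_pow hμ.le]
    rw [sq, hν]
    ring
  -- first Wald-type step
  have hstep1 : ∀ (l : ℕ) (W N : Ω → ℕ), Measurable[m l] W → Measurable[m l] N →
      ∫⁻ ω, (W ω : ℝ≥0∞) * ((∑ i ∈ Finset.Icc 1 (N ω), ξ l i ω : ℕ) : ℝ≥0∞) ∂P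
        = ν * ∫⁻ ω, (W ω : ℝ≥0∞) * (N ω : ℝ≥0∞) ∂P := by
    intro l W N hW hN
    have hWa : Measurable W := hW.mono (hm_le l) le_rfl
    have hNa : Measurable N := hN.mono (hm_le l) le_rfl
    set χ : ℕ → Ω → ℝ≥0∞ :=
      fun i => Set.indicator {ω | i ∈ Finset.Icc 1 (N ω)} (fun _ => 1) with hχ
    have hSm : ∀ i : ℕ, MeasurableSet[m l] {ω | i ∈ Finset.Icc 1 (N ω)} := by
      intro i
      exact hN (show MeasurableSet {n : ℕ | i ∈ Finset.Icc 1 n} from trivial)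
    have hχm : ∀ i, Measurable[m l] (χ i) := fun i => measurable_const.indicator (hSm i)
    have hχ0 : ∀ (i : ℕ) (ω : Ω), i ∉ Finset.Icc 1 (N ω) → χ i ω = 0 := fun i ω hi =>
      Set.indicator_of_notMem (s := {ω' : Ω | i ∈ Finset.Icc 1 (N ω')}) (a := ω) hi _
    have hχ1 : ∀ (i : ℕ) (ω : Ω), i ∈ Finset.Icc 1 (N ω) → χ i ω = 1 := fun i ω hi =>
      Set.indicator_of_mem (s := {ω' : Ω | i ∈ Finset.Icc 1 (N ω')}) (a := ω) hi _
    have hχa : ∀ i, Measurable (χ i) := fun i => (hχm i).mono (hm_le l) le_rfl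
    have hc1 : ∀ ω, ((∑ i ∈ Finset.Icc 1 (N ω), ξ l i ω : ℕ) : ℝ≥0∞)
        = ∑' i, χ i ω * (ξ l i ω : ℝ≥0∞) := by
      intro ω
      rw [Nat.cast_sum]
      rw [tsum_eq_sum (s := Finset.Icc 1 (N ω)) (f := fun i => χ i ω * (ξ l i ω : ℝ≥0∞))
        (fun i hi => by simp only [hχ0 i ω hi, zero_mul])]
      exact Finset.sum_congr rfl fun i hi => by simp only [hχ1 i ω hi, one_mul]
    have hc2 : ∀ ω, ∑' i, χ i ω = (N ω : ℝ≥0∞) := by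
      intro ω
      rw [tsum_eq_sum (s := Finset.Icc 1 (N ω)) (f := fun i => χ i ω)
        (fun i hi => hχ0 i ω hi)]
      have h1 : ∀ i ∈ Finset.Icc 1 (N ω), χ i ω = 1 := fun i hi => hχ1 i ω hi
      rw [Finset.sum_congr rfl h1, Finset.sum_const, Nat.card_Icc]
      simp
    calc ∫⁻ ω, (W ω : ℝ≥0∞) * ((∑ i ∈ Finset.Icc 1 (N ω), ξ l i ω : ℕ) : ℝ≥0∞) ∂P
        = ∫⁻ ω, ∑' i, ((W ω : ℝ≥0∞) * χ i ω) * (ξ l i ω : ℝ≥0∞) ∂P := by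
          refine lintegral_congr fun ω => ?_
          rw [hc1 ω, ← ENNReal.tsum_mul_left]
          exact tsum_congr fun i => by ring
      _ = ∑' i, ∫⁻ ω, ((W ω : ℝ≥0∞) * χ i ω) * (ξ l i ω : ℝ≥0∞) ∂P := by
          exact lintegral_tsum fun i =>
            (((measurable_from_top.comp hWa).mul (hχa i)).mul (hξc l i)).aemeasurable
      _ = ∑' i, (∫⁻ ω, (W ω : ℝ≥0∞) * χ i ω ∂P) * ν := by
          refine tsum_congr fun i => ?_
          have hprod := lintegral_mul_eq_lintegral_mul_lintegral_of_independent_measurableSpace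
            (μ := P) (hm_le l) (hs_le (l, i)) (hI1 l i)
            (f := fun ω => (W ω : ℝ≥0∞) * χ i ω) (g := fun ω => (ξ l i ω : ℝ≥0∞))
            (Measurable.mul (measurable_from_top.comp hW) (hχm i))
            (measurable_from_top.comp (hξs l i))
          rw [hprod, hmean l i]
      _ = ν * ∫⁻ ω, (W ω : ℝ≥0∞) * (N ω : ℝ≥0∞) ∂P := by
          rw [ENNReal.tsum_mul_right, mul_comm]
          congr 1
          rw [← lintegral_tsum (f := fun i ω => (W ω : ℝ≥0∞) * χ i ω) (fun i =>
            (Measurable.mul (measurable_from_top.comp hWa) (hχa i)).aemeasurable)]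
          refine lintegral_congr fun ω => ?_
          rw [ENNReal.tsum_mul_left, hc2 ω]
  -- second Wald-type step
  have hstep2 : ∀ (l : ℕ) (N : Ω → ℕ), Measurable[m l] N →
      ∫⁻ ω, ((∑ i ∈ Finset.Icc 1 (N ω), ξ l i ω : ℕ) : ℝ≥0∞) ^ 2 ∂P
        = ν * ν * ∫⁻ ω, (N ω : ℝ≥0∞) ^ 2 ∂P + ν * ∫⁻ ω, (N ω : ℝ≥0∞) ∂P := by
    intro l N hN
    have hNa : Measurable N := hN.mono (hm_le l) le_rfl
    set χ : ℕ → Ω → ℝ≥0∞ :=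
      fun i => Set.indicator {ω | i ∈ Finset.Icc 1 (N ω)} (fun _ => 1) with hχ
    have hSm : ∀ i : ℕ, MeasurableSet[m l] {ω | i ∈ Finset.Icc 1 (N ω)} := by
      intro i
      exact hN (show MeasurableSet {n : ℕ | i ∈ Finset.Icc 1 n} from trivial)
    have hχm : ∀ i, Measurable[m l] (χ i) := fun i => measurable_const.indicator (hSm i)
    have hχ0 : ∀ (i : ℕ) (ω : Ω), i ∉ Finset.Icc 1 (N ω) → χ i ω = 0 := fun i ω hi =>
      Set.indicator_of_notMem (s := {ω' : Ω | i ∈ Finset.Icc 1 (N ω')}) (a := ω) hi _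
    have hχ1 : ∀ (i : ℕ) (ω : Ω), i ∈ Finset.Icc 1 (N ω) → χ i ω = 1 := fun i ω hi =>
      Set.indicator_of_mem (s := {ω' : Ω | i ∈ Finset.Icc 1 (N ω')}) (a := ω) hi _
    have hχa : ∀ i, Measurable (χ i) := fun i => (hχm i).mono (hm_le l) le_rfl
    have hχχ : ∀ (i : ℕ) (ω : Ω), χ i ω * χ i ω = χ i ω := by
      intro i ω
      by_cases hi : i ∈ Finset.Icc 1 (N ω)
      · rw [hχ1 i ω hi, one_mul]
      · rw [hχ0 i ω hi, zero_mul]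
    set b : ℕ → Ω → ℝ≥0∞ := fun i ω => χ i ω * (ξ l i ω : ℝ≥0∞) with hb
    have hba : ∀ i, Measurable (b i) := fun i => (hχa i).mul (hξc l i)
    have hc1 : ∀ ω, ((∑ i ∈ Finset.Icc 1 (N ω), ξ l i ω : ℕ) : ℝ≥0∞) = ∑' i, b i ω := by
      intro ω
      rw [Nat.cast_sum]
      rw [tsum_eq_sum (s := Finset.Icc 1 (N ω)) (f := fun i => b i ω)
        (fun i hi => by simp only [hb, hχ0 i ω hi, zero_mul])]
      exact Finset.sum_congr rfl fun i hi => by simp only [hb, hχ1 i ω hi, one_mul]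
    have hc2 : ∀ ω, ∑' i, χ i ω = (N ω : ℝ≥0∞) := by
      intro ω
      rw [tsum_eq_sum (s := Finset.Icc 1 (N ω)) (f := fun i => χ i ω)
        (fun i hi => hχ0 i ω hi)]
      have h1 : ∀ i ∈ Finset.Icc 1 (N ω), χ i ω = 1 := fun i hi => hχ1 i ω hi
      rw [Finset.sum_congr rfl h1, Finset.sum_const, Nat.card_Icc]
      simp
    -- per-pair expectations
    have hpair : ∀ i j : ℕ, ∫⁻ ω, b i ω * b j ω ∂P
        = ν * ν * ∫⁻ ω, χ i ω * χ j ω ∂P + (if j = i then ν * ∫⁻ ω, χ i ω ∂P else 0) := by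
      intro i j
      rcases eq_or_ne j i with rfl | hji
      · rw [if_pos rfl]
        have hbb : ∀ ω, b j ω * b j ω = χ j ω * (ξ l j ω : ℝ≥0∞) ^ 2 := by
          intro ω
          rw [hb]
          simp only
          rw [mul_mul_mul_comm, hχχ j ω, sq]
        rw [lintegral_congr hbb]
        have hprod := lintegral_mul_eq_lintegral_mul_lintegral_of_independent_measurableSpace
          (μ := P) (hm_le l) (hs_le (l, j)) (hI1 l j)
          (f := fun ω => χ j ω) (g := fun ω => (ξ l j ω : ℝ≥0∞) ^ 2)
          (hχm j) ((measurable_from_top.comp (hξs l j)).pow_const 2)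
        rw [hprod, hsq l j, lintegral_congr fun ω => hχχ j ω]
        ring
      · rw [if_neg hji, add_zero]
        set m' : MeasurableSpace Ω :=
          ⨆ p ∈ ({p : ℕ × ℕ | p.1 < l} ∪ {((l, i) : ℕ × ℕ)}), s p with hm'
        have hml' : m l ≤ m' := biSup_mono fun p hp => Or.inl hp
        have hm'_le : m' ≤ _ := iSup₂_le (fun p (_ : p ∈ {p : ℕ × ℕ | p.1 < l} ∪ {((l, i) : ℕ × ℕ)}) => hs_le p)
        have hξi' : Measurable[m'] (ξ l i) := measurable_iff_comap_le.mpr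
          (le_biSup s (show ((l, i) : ℕ × ℕ) ∈ _ from Or.inr rfl))
        have h1 : ∫⁻ ω, b i ω * b j ω ∂P
            = ∫⁻ ω, ((χ i ω * χ j ω) * (ξ l i ω : ℝ≥0∞)) * (ξ l j ω : ℝ≥0∞) ∂P :=
          lintegral_congr fun ω => by rw [hb]; simp only; ring
        rw [h1]
        have hprod1 := lintegral_mul_eq_lintegral_mul_lintegral_of_independent_measurableSpace
          (μ := P) hm'_le (hs_le (l, j)) (hI2 l i j hji)
          (f := fun ω => (χ i ω * χ j ω) * (ξ l i ω : ℝ≥0∞))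
          (g := fun ω => (ξ l j ω : ℝ≥0∞))
          (Measurable.mul (Measurable.mul ((hχm i).mono hml' le_rfl)
            ((hχm j).mono hml' le_rfl)) (measurable_from_top.comp hξi'))
          (measurable_from_top.comp (hξs l j))
        rw [hprod1, hmean l j]
        have hprod2 := lintegral_mul_eq_lintegral_mul_lintegral_of_independent_measurableSpace
          (μ := P) (hm_le l) (hs_le (l, i)) (hI1 l i)
          (f := fun ω => χ i ω * χ j ω) (g := fun ω => (ξ l i ω : ℝ≥0∞))
          (Measurable.mul (hχm i) (hχm j)) (measurable_from_top.comp (hξs l i))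
        rw [hprod2, hmean l i]
        ring
    calc ∫⁻ ω, ((∑ i ∈ Finset.Icc 1 (N ω), ξ l i ω : ℕ) : ℝ≥0∞) ^ 2 ∂P
        = ∫⁻ ω, ∑' i, ∑' j, b i ω * b j ω ∂P := by
          refine lintegral_congr fun ω => ?_
          rw [sq, hc1 ω, ← ENNReal.tsum_mul_right]
          exact tsum_congr fun i => by rw [← ENNReal.tsum_mul_left]
      _ = ∑' i, ∑' j, ∫⁻ ω, b i ω * b j ω ∂P := by
          rw [lintegral_tsum (f := fun i ω => ∑' j, b i ω * b j ω) (fun i =>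
            (Measurable.ennreal_tsum fun j => (hba i).mul (hba j)).aemeasurable)]
          exact tsum_congr fun i =>
            lintegral_tsum fun j => ((hba i).mul (hba j)).aemeasurable
      _ = ∑' i : ℕ, ((∑' j : ℕ, ν * ν * ∫⁻ ω, χ i ω * χ j ω ∂P) + ν * ∫⁻ ω, χ i ω ∂P) := by
          refine tsum_congr fun i => ?_
          rw [tsum_congr fun j => hpair i j, ENNReal.tsum_add, tsum_ite_eq]
      _ = ν * ν * ∫⁻ ω, (N ω : ℝ≥0∞) ^ 2 ∂P + ν * ∫⁻ ω, (N ω : ℝ≥0∞) ∂P := by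
          rw [ENNReal.tsum_add]
          congr 1
          · rw [tsum_congr fun i => ENNReal.tsum_mul_left (a := ν * ν)
              (f := fun j => ∫⁻ ω, χ i ω * χ j ω ∂P), ENNReal.tsum_mul_left]
            congr 1
            calc ∑' (i : ℕ) (j : ℕ), ∫⁻ ω, χ i ω * χ j ω ∂P
                = ∫⁻ ω, ∑' (i : ℕ) (j : ℕ), χ i ω * χ j ω ∂P := by
                  rw [lintegral_tsum (f := fun i ω => ∑' j, χ i ω * χ j ω) (fun i =>
                    (Measurable.ennreal_tsum fun j => (hχa i).mul (hχa j)).aemeasurable)]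
                  exact (tsum_congr fun i =>
                    lintegral_tsum fun j => ((hχa i).mul (hχa j)).aemeasurable).symm
              _ = ∫⁻ ω, (N ω : ℝ≥0∞) ^ 2 ∂P := by
                  refine lintegral_congr fun ω => ?_
                  rw [tsum_congr fun i => ENNReal.tsum_mul_left (a := χ i ω)
                    (f := fun j => χ j ω)]
                  rw [hc2 ω, ENNReal.tsum_mul_right, hc2 ω, sq]
          · rw [ENNReal.tsum_mul_left]
            congr 1
            rw [← lintegral_tsum (f := fun i ω => χ i ω) (fun i => (hχa i).aemeasurable)]
            exact lintegral_congr fun ω => hc2 ω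
  -- measurability of Z
  have hsum_meas : ∀ (mm : MeasurableSpace Ω) (j : ℕ) (N : Ω → ℕ),
      Measurable[mm] N → (∀ i, Measurable[mm] (ξ j i)) →
      Measurable[mm] (fun ω => ∑ i ∈ Finset.Icc 1 (N ω), ξ j i ω) := by
    intro mm j N hN hξ'
    apply measurable_to_countable'
    intro n
    have hset : (fun ω => ∑ i ∈ Finset.Icc 1 (N ω), ξ j i ω) ⁻¹' {n}
        = ⋃ c : ℕ, (N ⁻¹' {c} ∩ {ω | ∑ i ∈ Finset.Icc 1 c, ξ j i ω = n}) := by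
      ext ω
      simp only [Set.mem_preimage, Set.mem_singleton_iff, Set.mem_iUnion, Set.mem_inter_iff,
        Set.mem_setOf_eq]
      constructor
      · intro h
        exact ⟨N ω, rfl, h⟩
      · rintro ⟨c, hc, h⟩
        rw [hc]
        exact h
    rw [hset]
    exact MeasurableSet.iUnion fun c => (hN (measurableSet_singleton c)).inter
      ((Finset.measurable_sum (Finset.Icc 1 c) fun i _ => hξ' i) (measurableSet_singleton n))
  have hZm : ∀ n : ℕ, Measurable[m n] (Z n) := by
    intro n
    induction n with
    | zero =>
      have h0 : Z 0 = fun _ => 1 := funext hZ0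
      rw [h0]
      exact measurable_const
    | succ n ih =>
      have h0 : Z (n + 1) = fun ω => ∑ i ∈ Finset.Icc 1 (Z n ω), ξ n i ω :=
        funext (hZrec n)
      rw [h0]
      exact hsum_meas (m (n + 1)) n (Z n) (ih.mono (hm_mono n (n + 1) (Nat.le_succ n)) le_rfl)
        (fun i => hξm (n + 1) n i (Nat.lt_succ_self n))
  have hZml : ∀ a b : ℕ, a ≤ b → Measurable[m b] (Z a) :=
    fun a b hab => (hZm a).mono (hm_mono a b hab) le_rfl
  have hZa : ∀ n, Measurable (Z n) := fun n => (hZm n).mono (hm_le n) le_rfl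
  -- first moment
  have hM1 : ∀ n : ℕ, ∫⁻ ω, (Z n ω : ℝ≥0∞) ∂P = ν ^ n := by
    intro n
    induction n with
    | zero => simp [hZ0]
    | succ n ih =>
      calc ∫⁻ ω, (Z (n + 1) ω : ℝ≥0∞) ∂P
          = ∫⁻ ω, (((fun _ => 1) : Ω → ℕ) ω : ℝ≥0∞)
              * ((∑ i ∈ Finset.Icc 1 (Z n ω), ξ n i ω : ℕ) : ℝ≥0∞) ∂P := by
            refine lintegral_congr fun ω => ?_
            rw [hZrec n ω]
            simp
        _ = ν * ∫⁻ ω, (((fun _ => 1) : Ω → ℕ) ω : ℝ≥0∞) * (Z n ω : ℝ≥0∞) ∂P :=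
            hstep1 n (fun _ => 1) (Z n) measurable_const (hZm n)
        _ = ν ^ (n + 1) := by
            have h1 : ∀ ω : Ω, (((fun _ => 1) : Ω → ℕ) ω : ℝ≥0∞) * (Z n ω : ℝ≥0∞)
                = (Z n ω : ℝ≥0∞) := fun ω => by simp
            rw [lintegral_congr h1, ih, pow_succ]
            ring
  -- second moment
  have hM2 : ∀ n : ℕ, ∫⁻ ω, (Z n ω : ℝ≥0∞) ^ 2 ∂P
      = ν ^ n * ∑ j ∈ Finset.range (n + 1), ν ^ j := by
    intro n
    induction n with
    | zero => simp [hZ0]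
    | succ n ih =>
      have h1 : ∫⁻ ω, (Z (n + 1) ω : ℝ≥0∞) ^ 2 ∂P
          = ∫⁻ ω, ((∑ i ∈ Finset.Icc 1 (Z n ω), ξ n i ω : ℕ) : ℝ≥0∞) ^ 2 ∂P := by
        refine lintegral_congr fun ω => ?_
        rw [hZrec n ω]
      rw [h1, hstep2 n (Z n) (hZm n), ih, hM1 n]
      rw [Finset.sum_range_succ' (fun j => ν ^ j) (n + 1)]
      have h2 : ∑ i ∈ Finset.range (n + 1), ν ^ (i + 1)
          = (∑ j ∈ Finset.range (n + 1), ν ^ j) * ν := by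
        rw [Finset.sum_mul]
        exact Finset.sum_congr rfl fun i _ => pow_succ ν i
      rw [h2]
      ring
  -- mixed moment
  have hMkl : ∀ d : ℕ, ∫⁻ ω, (Z k ω : ℝ≥0∞) * (Z (k + d) ω : ℝ≥0∞) ∂P
      = ν ^ (k + d) * ∑ j ∈ Finset.range (k + 1), ν ^ j := by
    intro d
    induction d with
    | zero =>
      simp only [Nat.add_zero]
      have hsq' : ∀ ω : Ω, (Z k ω : ℝ≥0∞) * (Z k ω : ℝ≥0∞) = (Z k ω : ℝ≥0∞) ^ 2 :=
        fun ω => (sq _).symm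
      rw [lintegral_congr hsq', hM2 k]
    | succ d ih =>
      have h1 : ∫⁻ ω, (Z k ω : ℝ≥0∞) * (Z (k + (d + 1)) ω : ℝ≥0∞) ∂P
          = ∫⁻ ω, (Z k ω : ℝ≥0∞)
              * ((∑ i ∈ Finset.Icc 1 (Z (k + d) ω), ξ (k + d) i ω : ℕ) : ℝ≥0∞) ∂P := by
        refine lintegral_congr fun ω => ?_
        rw [show k + (d + 1) = (k + d) + 1 from rfl, hZrec (k + d) ω]
      rw [h1, hstep1 (k + d) (Z k) (Z (k + d)) (hZml k (k + d) (Nat.le_add_right k d))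
        (hZm (k + d)), ih, show k + (d + 1) = (k + d) + 1 from rfl, pow_succ]
      ring
  -- conversion to real integrals
  have hint1 : ∀ n : ℕ, ∫ ω, (Z n ω : ℝ) ∂P = μ ^ n := by
    intro n
    have h := integral_toReal (f := fun ω => ((Z n ω : ℕ) : ℝ≥0∞))
      (measurable_from_top.comp (hZa n)).aemeasurable
      (ae_of_all P fun ω => ENNReal.natCast_lt_top _)
    rw [hM1 n] at h
    calc ∫ ω, (Z n ω : ℝ) ∂P
        = ∫ ω, (((Z n ω : ℕ) : ℝ≥0∞)).toReal ∂P := by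
          refine integral_congr_ae (ae_of_all P fun ω => ?_)
          simp only [ENNReal.toReal_natCast]
      _ = (ν ^ n).toReal := h
      _ = μ ^ n := by rw [ENNReal.toReal_pow, ENNReal.toReal_ofReal hμ.le]
  obtain ⟨d, rfl⟩ := Nat.exists_eq_add_of_le hkl
  have hint2 : ∫ ω, (Z k ω : ℝ) * (Z (k + d) ω : ℝ) ∂P
      = μ ^ (k + d) * ∑ j ∈ Finset.range (k + 1), μ ^ j := by
    have h := integral_toReal (f := fun ω => (Z k ω : ℝ≥0∞) * (Z (k + d) ω : ℝ≥0∞))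
      ((Measurable.mul (f := fun ω => (Z k ω : ℝ≥0∞)) (g := fun ω => (Z (k + d) ω : ℝ≥0∞))
        (measurable_from_top.comp (hZa k))
        (measurable_from_top.comp (hZa (k + d)))).aemeasurable)
      (ae_of_all P fun ω =>
        ENNReal.mul_lt_top (ENNReal.natCast_lt_top _) (ENNReal.natCast_lt_top _))
    rw [hMkl d] at h
    calc ∫ ω, (Z k ω : ℝ) * (Z (k + d) ω : ℝ) ∂P
        = ∫ ω, ((Z k ω : ℝ≥0∞) * (Z (k + d) ω : ℝ≥0∞)).toReal ∂P := by
          refine integral_congr_ae (ae_of_all P fun ω => ?_)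
          simp only [ENNReal.toReal_mul, ENNReal.toReal_natCast]
      _ = (ν ^ (k + d) * ∑ j ∈ Finset.range (k + 1), ν ^ j).toReal := h
      _ = μ ^ (k + d) * ∑ j ∈ Finset.range (k + 1), μ ^ j := by
          rw [ENNReal.toReal_mul, ENNReal.toReal_pow,
            ENNReal.toReal_sum (fun j _ => ENNReal.pow_ne_top ENNReal.ofReal_ne_top)]
          rw [hν, ENNReal.toReal_ofReal hμ.le]
          congr 1
          exact Finset.sum_congr rfl fun j _ => by
            rw [ENNReal.toReal_pow, ENNReal.toReal_ofReal hμ.le]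
  refine ⟨?_, ?_, ?_⟩
  · rw [hint2, hint1 k, hint1 (k + d), Finset.sum_range_succ]
    ring
  · exact hint2
  · intro hμ1
    have hne : (1 : ℝ) - μ ≠ 0 := sub_ne_zero.mpr (Ne.symm hμ1)
    have hne' : μ - 1 ≠ 0 := sub_ne_zero.mpr hμ1
    constructor
    · rw [hint2, hint1 k, hint1 (k + d), Finset.sum_range_succ, geom_sum_eq hμ1 k]
      field_simp
      ring
    · rw [hint2, geom_sum_eq hμ1 (k + 1)]
      field_simp
      ring
end

section
/- Let Z and Z′ be ℕ-valued random variables with E[Z Z′] < ∞ satisfying the positive quadrant dependence condition ℙ(Z ≥ i, Z′ ≥ j) ≥ ℙ(Z ≥ i)ℙ(Z′ ≥ j) for all i, j ≥ 1. Let (T_i)_{i ≥ 1} and (S_j)_{j ≥ 1} be real-valued random variables such that the σ-algebra generated by the whole family (T_i, S_j)_{i,j ≥ 1} is independent of the σ-algebra generated by (Z, Z′). Let A and B be Borel subsets of ℝ and p ≥ 0 a real number with ℙ(S_j ∈ B) ≤ p for every j ≥ 1. Then |Cov(Σ_{i=1}^{Z} 1_{{T_i ∈ A}}, Σ_{j=1}^{Z′}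 1_{{S_j ∈ B}})| ≤ p · (E[Z Z′] + Cov(Z, Z′)). -/
open MeasureTheory ProbabilityTheory
open scoped ENNReal

lemma covAux_tsum_if (n : ℕ) (c : ℕ → ℝ≥0∞) :
    ∑' i : ℕ, (if 1 ≤ i ∧ i ≤ n then c i else 0) = ∑ i ∈ Finset.Icc 1 n, c i := by
  rw [tsum_eq_sum (s := Finset.Icc 1 n) (fun i hi => if_neg (fun h => hi (Finset.mem_Icc.mpr h)))]
  exact Finset.sum_congr rfl fun i hi => if_pos (Finset.mem_Icc.mp hi)

lemma covAux_cast (n : ℕ) :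
    (n : ℝ≥0∞) = ∑' i : ℕ, (if 1 ≤ i ∧ i ≤ n then (1 : ℝ≥0∞) else 0) := by
  rw [covAux_tsum_if]
  simp [Nat.card_Icc]

lemma covAux_ind_mul {Ω : Type*} (s t : Set Ω) (ω : Ω) :
    s.indicator (fun _ => (1 : ℝ≥0∞)) ω * t.indicator (fun _ => (1 : ℝ≥0∞)) ω
      = (s ∩ t).indicator (fun _ => (1 : ℝ≥0∞)) ω := by
  by_cases hs : ω ∈ s <;> by_cases ht : ω ∈ t <;>
    simp [Set.indicator, hs, ht]

/-- For `ℕ`-valued `Z, Z'` with `E[ZZ'] < ∞` which are positively quadrant dependent, and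
points `(T_i)`, `(S_j)` independent (as a family) of `(Z, Z')`, if `ℙ(S_j ∈ B) ≤ p` for all
`j ≥ 1`, then `|Cov(Σ_{i=1}^{Z} 1_{T_i ∈ A}, Σ_{j=1}^{Z'} 1_{S_j ∈ B})|
≤ p (E[ZZ'] + Cov(Z, Z'))`. -/
theorem cov_random_sums_bound {Ω : Type*} [MeasurableSpace Ω]
    (P : Measure Ω) [IsProbabilityMeasure P]
    (Z Z' : Ω → ℕ) (hZ : Measurable Z) (hZ' : Measurable Z')
    (hint : Integrable (fun ω => (Z ω : ℝ) * (Z' ω : ℝ)) P)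
    (hpqd : ∀ i j : ℕ, 1 ≤ i → 1 ≤ j →
      P {ω | i ≤ Z ω} * P {ω | j ≤ Z' ω} ≤ P {ω | i ≤ Z ω ∧ j ≤ Z' ω})
    (T S : ℕ → Ω → ℝ)
    (hT : ∀ i, Measurable (T i)) (hS : ∀ j, Measurable (S j))
    (hindep : IndepFun (fun ω => (fun q : ℕ × ℕ => (T q.1 ω, S q.2 ω)))
      (fun ω => (Z ω, Z' ω)) P)
    (A B : Set ℝ) (hA : MeasurableSet A) (hB : MeasurableSet B)
    (p : ℝ) (hp : 0 ≤ p)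
    (hSB : ∀ j : ℕ, 1 ≤ j → P {ω | S j ω ∈ B} ≤ ENNReal.ofReal p) :
    |(∫ ω, (∑ i ∈ Finset.Icc 1 (Z ω), A.indicator (fun _ => (1 : ℝ)) (T i ω))
          * (∑ j ∈ Finset.Icc 1 (Z' ω), B.indicator (fun _ => (1 : ℝ)) (S j ω)) ∂P)
        - (∫ ω, ∑ i ∈ Finset.Icc 1 (Z ω), A.indicator (fun _ => (1 : ℝ)) (T i ω) ∂P)
          * (∫ ω, ∑ j ∈ Finset.Icc 1 (Z' ω), B.indicator (fun _ => (1 : ℝ)) (S j ω) ∂P)|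
      ≤ p * ((∫ ω, (Z ω : ℝ) * (Z' ω : ℝ) ∂P)
          + ((∫ ω, (Z ω : ℝ) * (Z' ω : ℝ) ∂P)
            - (∫ ω, (Z ω : ℝ) ∂P) * (∫ ω, (Z' ω : ℝ) ∂P))) := by
  classical
  -- abbreviations for the basic events
  set u : ℕ → Set Ω := fun i => {ω | T i ω ∈ A} with hu
  set v : ℕ → Set Ω := fun j => {ω | S j ω ∈ B} with hv
  set w : ℕ → Set Ω := fun i => {ω | 1 ≤ i ∧ i ≤ Z ω} with hw
  set w' : ℕ → Set Ω := fun j => {ω | 1 ≤ j ∧ j ≤ Z' ω} with hw'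
  have hum : ∀ i, MeasurableSet (u i) := fun i => (hT i) hA
  have hvm : ∀ j, MeasurableSet (v j) := fun j => (hS j) hB
  have hwm : ∀ i, MeasurableSet (w i) := by
    intro i
    rcases Nat.eq_zero_or_pos i with h | h
    · have : w i = ∅ := by ext ω; simp [hw, h]
      rw [this]; exact MeasurableSet.empty
    · have : w i = Z ⁻¹' Set.Ici i := by ext ω; simp [hw, h, Set.mem_Ici]; omega
      rw [this]; exact hZ measurableSet_Ici
  have hw'm : ∀ j, MeasurableSet (w' j) := by
    intro j
    rcases Nat.eq_zero_or_pos j with h | h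
    · have : w' j = ∅ := by ext ω; simp [hw', h]
      rw [this]; exact MeasurableSet.empty
    · have : w' j = Z' ⁻¹' Set.Ici j := by ext ω; simp [hw', h, Set.mem_Ici]; omega
      rw [this]; exact hZ' measurableSet_Ici
  -- the random sums
  set X : Ω → ℝ := fun ω => ∑ i ∈ Finset.Icc 1 (Z ω), A.indicator (fun _ => (1 : ℝ)) (T i ω)
    with hX
  set Y : Ω → ℝ := fun ω => ∑ j ∈ Finset.Icc 1 (Z' ω), B.indicator (fun _ => (1 : ℝ)) (S j ω)
    with hY
  have hXnn : ∀ ω, 0 ≤ X ω := fun ω =>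
    Finset.sum_nonneg fun i _ => Set.indicator_nonneg (fun _ _ => zero_le_one) _
  have hYnn : ∀ ω, 0 ≤ Y ω := fun ω =>
    Finset.sum_nonneg fun j _ => Set.indicator_nonneg (fun _ _ => zero_le_one) _
  -- pointwise expansion of the sums as tsums of indicators, in ℝ≥0∞
  have hXpt : ∀ ω, ENNReal.ofReal (X ω)
      = ∑' i : ℕ, (u i ∩ w i).indicator (fun _ => (1 : ℝ≥0∞)) ω := by
    intro ω
    rw [hX, ENNReal.ofReal_sum_of_nonneg
      (fun i _ => Set.indicator_nonneg (fun _ _ => zero_le_one) _), ← covAux_tsum_if]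
    refine tsum_congr fun i => ?_
    by_cases h1 : 1 ≤ i ∧ i ≤ Z ω <;> by_cases h2 : T i ω ∈ A <;>
      simp [hu, hw, Set.indicator, h1, h2]
  have hYpt : ∀ ω, ENNReal.ofReal (Y ω)
      = ∑' j : ℕ, (v j ∩ w' j).indicator (fun _ => (1 : ℝ≥0∞)) ω := by
    intro ω
    rw [hY, ENNReal.ofReal_sum_of_nonneg
      (fun j _ => Set.indicator_nonneg (fun _ _ => zero_le_one) _), ← covAux_tsum_if]
    refine tsum_congr fun j => ?_
    by_cases h1 : 1 ≤ j ∧ j ≤ Z' ω <;> by_cases h2 : S j ω ∈ B <;>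
      simp [hv, hw', Set.indicator, h1, h2]
  have hZpt : ∀ ω, (Z ω : ℝ≥0∞) = ∑' i : ℕ, (w i).indicator (fun _ => (1 : ℝ≥0∞)) ω := by
    intro ω
    rw [covAux_cast (Z ω)]
    refine tsum_congr fun i => ?_
    by_cases h1 : 1 ≤ i ∧ i ≤ Z ω <;> simp [hw, Set.indicator, h1]
  have hZ'pt : ∀ ω, (Z' ω : ℝ≥0∞) = ∑' j : ℕ, (w' j).indicator (fun _ => (1 : ℝ≥0∞)) ω := by
    intro ω
    rw [covAux_cast (Z' ω)]
    refine tsum_congr fun j => ?_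
    by_cases h1 : 1 ≤ j ∧ j ≤ Z' ω <;> simp [hw', Set.indicator, h1]
  -- product expansions
  have hXYpt : ∀ ω, ENNReal.ofReal (X ω * Y ω)
      = ∑' q : ℕ × ℕ,
          ((u q.1 ∩ v q.2) ∩ (w q.1 ∩ w' q.2)).indicator (fun _ => (1 : ℝ≥0∞)) ω := by
    intro ω
    rw [ENNReal.ofReal_mul (hXnn ω), hXpt ω, hYpt ω, ← ENNReal.tsum_mul_right]
    rw [ENNReal.tsum_prod']
    refine tsum_congr fun i => ?_
    rw [← ENNReal.tsum_mul_left]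
    refine tsum_congr fun j => ?_
    rw [covAux_ind_mul]
    congr 1
    ext ω'
    simp only [Set.mem_inter_iff]
    tauto
  have hZZ'pt : ∀ ω, (Z ω : ℝ≥0∞) * (Z' ω : ℝ≥0∞)
      = ∑' q : ℕ × ℕ, (w q.1 ∩ w' q.2).indicator (fun _ => (1 : ℝ≥0∞)) ω := by
    intro ω
    rw [hZpt ω, hZ'pt ω, ← ENNReal.tsum_mul_right, ENNReal.tsum_prod']
    refine tsum_congr fun i => ?_
    rw [← ENNReal.tsum_mul_left]
    exact tsum_congr fun j => covAux_ind_mul _ _ ω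
  -- lintegral expansions
  have hael : ∀ (s : Set Ω), MeasurableSet s →
      AEMeasurable (s.indicator (fun _ => (1 : ℝ≥0∞))) P :=
    fun s hs => (measurable_one.indicator hs).aemeasurable
  have hXYlint : ∫⁻ ω, ENNReal.ofReal (X ω * Y ω) ∂P
      = ∑' q : ℕ × ℕ, P ((u q.1 ∩ v q.2) ∩ (w q.1 ∩ w' q.2)) := by
    rw [lintegral_congr hXYpt,
      lintegral_tsum (μ := P) (f := fun q : ℕ × ℕ =>
        ((u q.1 ∩ v q.2) ∩ (w q.1 ∩ w' q.2)).indicator fun _ => (1 : ℝ≥0∞))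
        (fun q => hael _ (((hum q.1).inter (hvm q.2)).inter
        ((hwm q.1).inter (hw'm q.2))))]
    exact tsum_congr fun q => lintegral_indicator_one
      (((hum q.1).inter (hvm q.2)).inter ((hwm q.1).inter (hw'm q.2)))
  have hZZ'lint : ∫⁻ ω, (Z ω : ℝ≥0∞) * (Z' ω : ℝ≥0∞) ∂P
      = ∑' q : ℕ × ℕ, P (w q.1 ∩ w' q.2) := by
    rw [lintegral_congr hZZ'pt,
      lintegral_tsum (μ := P) (f := fun q : ℕ × ℕ =>
        (w q.1 ∩ w' q.2).indicator fun _ => (1 : ℝ≥0∞))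
        (fun q => hael _ ((hwm q.1).inter (hw'm q.2)))]
    exact tsum_congr fun q => lintegral_indicator_one ((hwm q.1).inter (hw'm q.2))
  have hXlint : ∫⁻ ω, ENNReal.ofReal (X ω) ∂P = ∑' i : ℕ, P (u i ∩ w i) := by
    rw [lintegral_congr hXpt,
      lintegral_tsum (μ := P) (f := fun i : ℕ =>
        (u i ∩ w i).indicator fun _ => (1 : ℝ≥0∞))
        (fun i => hael _ ((hum i).inter (hwm i)))]
    exact tsum_congr fun i => lintegral_indicator_one ((hum i).inter (hwm i))
  have hYlint : ∫⁻ ω, ENNReal.ofReal (Y ω) ∂P = ∑' j : ℕ, P (v j ∩ w' j) := by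
    rw [lintegral_congr hYpt,
      lintegral_tsum (μ := P) (f := fun j : ℕ =>
        (v j ∩ w' j).indicator fun _ => (1 : ℝ≥0∞))
        (fun j => hael _ ((hvm j).inter (hw'm j)))]
    exact tsum_congr fun j => lintegral_indicator_one ((hvm j).inter (hw'm j))
  have hZlint : ∫⁻ ω, (Z ω : ℝ≥0∞) ∂P = ∑' i : ℕ, P (w i) := by
    rw [lintegral_congr hZpt,
      lintegral_tsum (μ := P) (f := fun i : ℕ => (w i).indicator fun _ => (1 : ℝ≥0∞))
        (fun i => hael _ (hwm i))]
    exact tsum_congr fun i => lintegral_indicator_one (hwm i)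
  have hZ'lint : ∫⁻ ω, (Z' ω : ℝ≥0∞) ∂P = ∑' j : ℕ, P (w' j) := by
    rw [lintegral_congr hZ'pt,
      lintegral_tsum (μ := P) (f := fun j : ℕ => (w' j).indicator fun _ => (1 : ℝ≥0∞))
        (fun j => hael _ (hw'm j))]
    exact tsum_congr fun j => lintegral_indicator_one (hw'm j)
  -- independence consequences
  have hpair : ∀ i j : ℕ, 1 ≤ i → 1 ≤ j →
      P ((u i ∩ v j) ∩ (w i ∩ w' j)) = P (u i ∩ v j) * P (w i ∩ w' j) := by
    intro i j hi hj
    have h1 : MeasurableSet ((fun f : ℕ × ℕ → ℝ × ℝ => f (i, j)) ⁻¹' (A ×ˢ B)) :=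
      (measurable_pi_apply (i, j)) (hA.prod hB)
    have h2 : MeasurableSet ((Set.Ici i ×ˢ Set.Ici j : Set (ℕ × ℕ))) :=
      measurableSet_Ici.prod measurableSet_Ici
    have := hindep.measure_inter_preimage_eq_mul _ _ h1 h2
    have e1 : (fun ω => (fun q : ℕ × ℕ => (T q.1 ω, S q.2 ω)))
        ⁻¹' ((fun f : ℕ × ℕ → ℝ × ℝ => f (i, j)) ⁻¹' (A ×ˢ B)) = u i ∩ v j := by
      ext ω; simp [hu, hv, Set.mem_prod]
    have e2 : (fun ω => (Z ω, Z' ω)) ⁻¹' (Set.Ici i ×ˢ Set.Ici j) = w i ∩ w' j := by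
      ext ω; simp [hw, hw', Set.mem_prod, Set.mem_Ici, hi, hj]
    rwa [e1, e2] at this
  have hsingle : ∀ j : ℕ, 1 ≤ j → P (v j ∩ w' j) = P (v j) * P (w' j) := by
    intro j hj
    have hcomp : IndepFun (fun ω => S j ω) (fun ω => Z' ω) P := by
      have := hindep.comp (φ := fun f : ℕ × ℕ → ℝ × ℝ => (f (0, j)).2)
        (ψ := fun q : ℕ × ℕ => q.2) ((measurable_pi_apply (0, j)).snd) measurable_snd
      exact this
    have := hcomp.measure_inter_preimage_eq_mul _ _ hB (measurableSet_Ici (a := j))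
    have e1 : (fun ω => S j ω) ⁻¹' B = v j := rfl
    have e2 : (fun ω => Z' ω) ⁻¹' Set.Ici j = w' j := by
      ext ω; simp [hw', Set.mem_Ici, hj]
    rwa [e1, e2] at this
  -- the three lintegral bounds
  have hvle : ∀ j : ℕ, 1 ≤ j → P (v j) ≤ ENNReal.ofReal p := fun j hj => hSB j hj
  have hbound1 : ∫⁻ ω, ENNReal.ofReal (X ω * Y ω) ∂P
      ≤ ENNReal.ofReal p * ∫⁻ ω, (Z ω : ℝ≥0∞) * (Z' ω : ℝ≥0∞) ∂P := by
    rw [hXYlint, hZZ'lint, ← ENNReal.tsum_mul_left]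
    refine ENNReal.tsum_le_tsum fun q => ?_
    obtain ⟨i, j⟩ := q
    by_cases hi : 1 ≤ i
    · by_cases hj : 1 ≤ j
      · rw [hpair i j hi hj]
        exact mul_le_mul' ((measure_mono Set.inter_subset_right).trans (hvle j hj)) le_rfl
      · have : w' j = ∅ := by ext ω; simp [hw']; omega
        simp [this]
    · have : w i = ∅ := by ext ω; simp [hw]; omega
      simp [this]
  have hbound2 : ∫⁻ ω, ENNReal.ofReal (Y ω) ∂P
      ≤ ENNReal.ofReal p * ∫⁻ ω, (Z' ω : ℝ≥0∞) ∂P := by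
    rw [hYlint, hZ'lint, ← ENNReal.tsum_mul_left]
    refine ENNReal.tsum_le_tsum fun j => ?_
    by_cases hj : 1 ≤ j
    · rw [hsingle j hj]
      exact mul_le_mul' (hvle j hj) le_rfl
    · have : w' j = ∅ := by ext ω; simp [hw']; omega
      simp [this]
  have hbound3 : (∫⁻ ω, (Z ω : ℝ≥0∞) ∂P) * (∫⁻ ω, (Z' ω : ℝ≥0∞) ∂P)
      ≤ ∫⁻ ω, (Z ω : ℝ≥0∞) * (Z' ω : ℝ≥0∞) ∂P := by
    rw [hZlint, hZ'lint, hZZ'lint, ← ENNReal.tsum_mul_right]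
    rw [ENNReal.tsum_prod']
    refine ENNReal.tsum_le_tsum fun i => ?_
    rw [← ENNReal.tsum_mul_left]
    refine ENNReal.tsum_le_tsum fun j => ?_
    by_cases hi : 1 ≤ i
    · by_cases hj : 1 ≤ j
      · have e1 : w i = {ω | i ≤ Z ω} := by ext ω; simp [hw, hi]
        have e2 : w' j = {ω | j ≤ Z' ω} := by ext ω; simp [hw', hj]
        rw [e1, e2, ← Set.setOf_and]
        exact hpqd i j hi hj
      · have : w' j = ∅ := by ext ω; simp [hw']; omega
        simp [this]
    · have : w i = ∅ := by ext ω; simp [hw]; omega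
      simp [this]
  -- measurability of X and Y
  have hXe_meas : Measurable fun ω => ∑' i : ℕ, (u i ∩ w i).indicator (fun _ => (1 : ℝ≥0∞)) ω :=
    Measurable.ennreal_tsum fun i => measurable_one.indicator ((hum i).inter (hwm i))
  have hYe_meas : Measurable fun ω => ∑' j : ℕ, (v j ∩ w' j).indicator (fun _ => (1 : ℝ≥0∞)) ω :=
    Measurable.ennreal_tsum fun j => measurable_one.indicator ((hvm j).inter (hw'm j))
  have hXmeas : Measurable X := by
    have : X = fun ω => (∑' i : ℕ, (u i ∩ w i).indicator (fun _ => (1 : ℝ≥0∞)) ω).toReal := by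
      funext ω
      rw [← hXpt ω, ENNReal.toReal_ofReal (hXnn ω)]
    rw [this]
    exact hXe_meas.ennreal_toReal
  have hYmeas : Measurable Y := by
    have : Y = fun ω => (∑' j : ℕ, (v j ∩ w' j).indicator (fun _ => (1 : ℝ≥0∞)) ω).toReal := by
      funext ω
      rw [← hYpt ω, ENNReal.toReal_ofReal (hYnn ω)]
    rw [this]
    exact hYe_meas.ennreal_toReal
  have hZrmeas : Measurable fun ω => (Z ω : ℝ) := measurable_from_top.comp hZ
  have hZ'rmeas : Measurable fun ω => (Z' ω : ℝ) := measurable_from_top.comp hZ'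
  -- cast identity for the product
  have hcast : ∀ ω, ENNReal.ofReal ((Z ω : ℝ) * (Z' ω : ℝ))
      = (Z ω : ℝ≥0∞) * (Z' ω : ℝ≥0∞) := by
    intro ω
    rw [ENNReal.ofReal_mul (by positivity), ENNReal.ofReal_natCast, ENNReal.ofReal_natCast]
  -- finiteness of E[ZZ']
  have hZZ'ne : ∫⁻ ω, (Z ω : ℝ≥0∞) * (Z' ω : ℝ≥0∞) ∂P ≠ ∞ := by
    have h1 : ∫⁻ ω, (Z ω : ℝ≥0∞) * (Z' ω : ℝ≥0∞) ∂P
        = ∫⁻ ω, ‖(Z ω : ℝ) * (Z' ω : ℝ)‖₊ ∂P := by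
      refine lintegral_congr fun ω => ?_
      rw [← hcast ω, ← Real.enorm_eq_ofReal (by positivity), enorm_eq_nnnorm]
    rw [h1]
    exact hint.hasFiniteIntegral.ne
  -- integral representations
  have hEZZ' : ∫ ω, (Z ω : ℝ) * (Z' ω : ℝ) ∂P
      = (∫⁻ ω, (Z ω : ℝ≥0∞) * (Z' ω : ℝ≥0∞) ∂P).toReal := by
    rw [integral_eq_lintegral_of_nonneg_ae (f := fun ω => (Z ω : ℝ) * (Z' ω : ℝ)) (Filter.Eventually.of_forall fun ω => by positivity)
      (hZrmeas.mul hZ'rmeas).aestronglyMeasurable]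
    congr 1
    exact lintegral_congr hcast
  have hEXY : ∫ ω, X ω * Y ω ∂P = (∫⁻ ω, ENNReal.ofReal (X ω * Y ω) ∂P).toReal := by
    exact integral_eq_lintegral_of_nonneg_ae
      (Filter.Eventually.of_forall fun ω => mul_nonneg (hXnn ω) (hYnn ω))
      (hXmeas.mul hYmeas).aestronglyMeasurable
  have hEX : ∫ ω, X ω ∂P = (∫⁻ ω, ENNReal.ofReal (X ω) ∂P).toReal :=
    integral_eq_lintegral_of_nonneg_ae (Filter.Eventually.of_forall hXnn)
      hXmeas.aestronglyMeasurable
  have hEY : ∫ ω, Y ω ∂P = (∫⁻ ω, ENNReal.ofReal (Y ω) ∂P).toReal :=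
    integral_eq_lintegral_of_nonneg_ae (Filter.Eventually.of_forall hYnn)
      hYmeas.aestronglyMeasurable
  have hEZ : ∫ ω, (Z ω : ℝ) ∂P = (∫⁻ ω, (Z ω : ℝ≥0∞) ∂P).toReal := by
    rw [integral_eq_lintegral_of_nonneg_ae
      (Filter.Eventually.of_forall fun ω => by positivity) hZrmeas.aestronglyMeasurable]
    congr 1
    exact lintegral_congr fun ω => ENNReal.ofReal_natCast _
  have hEZ' : ∫ ω, (Z' ω : ℝ) ∂P = (∫⁻ ω, (Z' ω : ℝ≥0∞) ∂P).toReal := by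
    rw [integral_eq_lintegral_of_nonneg_ae
      (Filter.Eventually.of_forall fun ω => by positivity) hZ'rmeas.aestronglyMeasurable]
    congr 1
    exact lintegral_congr fun ω => ENNReal.ofReal_natCast _
  -- pointwise domination of X by Z, Y by Z'
  have hXleZ : ∀ ω, ENNReal.ofReal (X ω) ≤ (Z ω : ℝ≥0∞) := by
    intro ω
    rw [hXpt ω, hZpt ω]
    exact ENNReal.tsum_le_tsum fun i =>
      Set.indicator_le_indicator_of_subset Set.inter_subset_right (fun _ => zero_le_one) ω
  -- notation for lintegrals
  set LZZ := ∫⁻ ω, (Z ω : ℝ≥0∞) * (Z' ω : ℝ≥0∞) ∂P with hLZZ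
  set LZ := ∫⁻ ω, (Z ω : ℝ≥0∞) ∂P with hLZ
  set LZ' := ∫⁻ ω, (Z' ω : ℝ≥0∞) ∂P with hLZ'
  have hprodne : LZ * LZ' ≠ ∞ := (lt_of_le_of_lt hbound3 hZZ'ne.lt_top).ne
  -- E[Z]·E[Z'] ≤ E[ZZ']  (real version)
  have hcovZ : (∫ ω, (Z ω : ℝ) ∂P) * (∫ ω, (Z' ω : ℝ) ∂P) ≤ ∫ ω, (Z ω : ℝ) * (Z' ω : ℝ) ∂P := by
    rw [hEZ, hEZ', hEZZ']
    by_cases ha : LZ = ∞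
    · have hb : LZ' = 0 := by
        by_contra h
        exact hprodne (by rw [ha]; exact ENNReal.top_mul h)
      simp [hb]
    · by_cases hb : LZ' = ∞
      · have ha' : LZ = 0 := by
          by_contra h
          exact hprodne (by rw [hb]; exact ENNReal.mul_top h)
        simp [ha']
      · rw [← ENNReal.toReal_mul]
        exact ENNReal.toReal_mono hZZ'ne hbound3
  -- E[XY] ≤ p · E[ZZ']
  have hmain1 : ∫ ω, X ω * Y ω ∂P ≤ p * ∫ ω, (Z ω : ℝ) * (Z' ω : ℝ) ∂P := by
    rw [hEXY, hEZZ']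
    have h2 : (ENNReal.ofReal p * LZZ).toReal = p * LZZ.toReal := by
      rw [ENNReal.toReal_mul, ENNReal.toReal_ofReal hp]
    calc (∫⁻ ω, ENNReal.ofReal (X ω * Y ω) ∂P).toReal
        ≤ (ENNReal.ofReal p * LZZ).toReal :=
          ENNReal.toReal_mono (by finiteness) hbound1
      _ = p * LZZ.toReal := h2
  -- E[X]·E[Y] ≤ p · E[ZZ']
  have hmain2 : (∫ ω, X ω ∂P) * (∫ ω, Y ω ∂P) ≤ p * ∫ ω, (Z ω : ℝ) * (Z' ω : ℝ) ∂P := by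
    rw [hEX, hEY, hEZZ']
    by_cases ha : LZ = ∞
    · have hb : LZ' = 0 := by
        by_contra h
        exact hprodne (by rw [ha]; exact ENNReal.top_mul h)
      have hY0 : ∫⁻ ω, ENNReal.ofReal (Y ω) ∂P = 0 :=
        le_antisymm (hbound2.trans (by rw [hb, mul_zero])) zero_le
      rw [hY0]
      simp [mul_nonneg hp ENNReal.toReal_nonneg]
    · by_cases hb : LZ' = ∞
      · have ha' : LZ = 0 := by
          by_contra h
          exact hprodne (by rw [hb]; exact ENNReal.mul_top h)
        have hX0 : ∫⁻ ω, ENNReal.ofReal (X ω) ∂P = 0 :=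
          le_antisymm ((lintegral_mono hXleZ).trans (by rw [← hLZ, ha'])) zero_le
        rw [hX0]
        simp [mul_nonneg hp ENNReal.toReal_nonneg]
      · have h1 : (∫⁻ ω, ENNReal.ofReal (X ω) ∂P).toReal ≤ LZ.toReal :=
          ENNReal.toReal_mono ha (lintegral_mono hXleZ)
        have h2 : (∫⁻ ω, ENNReal.ofReal (Y ω) ∂P).toReal
            ≤ p * LZ'.toReal := by
          calc (∫⁻ ω, ENNReal.ofReal (Y ω) ∂P).toReal
              ≤ (ENNReal.ofReal p * LZ').toReal :=
                ENNReal.toReal_mono (ENNReal.mul_ne_top ENNReal.ofReal_ne_top hb) hbound2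
            _ = p * LZ'.toReal := by rw [ENNReal.toReal_mul, ENNReal.toReal_ofReal hp]
        calc (∫⁻ ω, ENNReal.ofReal (X ω) ∂P).toReal * (∫⁻ ω, ENNReal.ofReal (Y ω) ∂P).toReal
            ≤ LZ.toReal * (p * LZ'.toReal) := by
              apply mul_le_mul h1 h2 ENNReal.toReal_nonneg ENNReal.toReal_nonneg
          _ = p * (LZ.toReal * LZ'.toReal) := by ring
          _ ≤ p * LZZ.toReal := by
              apply mul_le_mul_of_nonneg_left _ hp
              rw [← ENNReal.toReal_mul]
              exact ENNReal.toReal_mono hZZ'ne hbound3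
  -- conclusion
  have h1 : 0 ≤ ∫ ω, X ω * Y ω ∂P :=
    integral_nonneg fun ω => mul_nonneg (hXnn ω) (hYnn ω)
  have h2 : 0 ≤ (∫ ω, X ω ∂P) * (∫ ω, Y ω ∂P) :=
    mul_nonneg (integral_nonneg hXnn) (integral_nonneg hYnn)
  rw [abs_le]
  constructor <;> nlinarith [hmain1, hmain2, hcovZ, h1, h2,
    mul_nonneg hp (sub_nonneg.mpr hcovZ)]
end

section
/- Fix k, l ∈ ℕ, δ > 0, ν ≥ 0, and real numbers s < t < t + r < u with r > 0 and t + r > 0. Let (T_i)_{i ≥ 1} and (S_j)_{j ≥ 1} be real-valued random variables such that: (a) the σ-algebra generated by the family (T_i, S_j)_{i,j ≥ 1} is independent of the σ-algebra generated by the family (ξ_{k,i})_{k,i}; (b) ℙ(S_j ≥ t + r) ≤ l^{1+δ} · ν / (t + r)^{1+δ} for every j ≥ 1; (c) ℙ(Z_k ≥ i, Z_l ≥ j) ≥ ℙ(Z_k ≥ i)ℙ(Z_l ≥ j) for all i, j ≥ 1. Then |Cov(Σ_{i=1}^{Z_k} 1_{{T_i ∈ (s, t]}}, Σ_{j=1}^{Z_l}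 1_{{S_j ∈ (t+r, u]}})| ≤ 2 · l^{1+δ} · ν / (t + r)^{1+δ} · μ^{max(k,l)} · (1 − μ^{min(k,l)+1})/(1 − μ). -/
open MeasureTheory ProbabilityTheory



lemma exp_tsum (x : ℝ) : ∑' n : ℕ, x ^ n / n.factorial = Real.exp x := by
  rw [Real.exp_eq_exp_ℝ, NormedSpace.exp_eq_tsum_div]

lemma summable1 (x : ℝ) : Summable (fun n : ℕ => (n : ℝ) * x ^ n / n.factorial) := by
  have h : ∀ n : ℕ, ((n+1 : ℕ) : ℝ) * x ^ (n+1) / (n+1).factorial = x * (x ^ n / n.factorial) := by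
    intro n
    rw [Nat.factorial_succ]
    push_cast
    field_simp
    ring
  rw [← summable_nat_add_iff 1]
  simp_rw [h]
  exact (Real.summable_pow_div_factorial x).mul_left x

lemma tsum1 (x : ℝ) : ∑' n : ℕ, (n : ℝ) * x ^ n / n.factorial = x * Real.exp x := by
  have h : ∀ n : ℕ, ((n+1 : ℕ) : ℝ) * x ^ (n+1) / (n+1).factorial = x * (x ^ n / n.factorial) := by
    intro n
    rw [Nat.factorial_succ]
    push_cast
    field_simp
    ring
  rw [Summable.tsum_eq_zero_add (summable1 x)]
  simp only [Nat.cast_zero, zero_mul, zero_div, zero_add]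
  simp_rw [h]
  rw [tsum_mul_left, exp_tsum]

lemma summable2 (x : ℝ) : Summable (fun n : ℕ => (n : ℝ)^2 * x ^ n / n.factorial) := by
  have h : ∀ n : ℕ, ((n+1 : ℕ) : ℝ)^2 * x ^ (n+1) / (n+1).factorial
      = x * ((n : ℝ) * x ^ n / n.factorial) + x * (x ^ n / n.factorial) := by
    intro n
    rw [Nat.factorial_succ]
    push_cast
    field_simp
    ring
  rw [← summable_nat_add_iff 1]
  simp_rw [h]
  exact (((summable1 x).mul_left x).add ((Real.summable_pow_div_factorial x).mul_left x))

lemma tsum2 (x : ℝ) : ∑' n : ℕ, (n : ℝ)^2 * x ^ n / n.factorial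
    = (x + x^2) * Real.exp x := by
  have h : ∀ n : ℕ, ((n+1 : ℕ) : ℝ)^2 * x ^ (n+1) / (n+1).factorial
      = x * ((n : ℝ) * x ^ n / n.factorial) + x * (x ^ n / n.factorial) := by
    intro n
    rw [Nat.factorial_succ]
    push_cast
    field_simp
    ring
  rw [Summable.tsum_eq_zero_add (summable2 x)]
  simp only [Nat.cast_zero, zero_pow, zero_mul, zero_div, zero_add, ne_eq, OfNat.ofNat_ne_zero,
    not_false_eq_true]
  simp_rw [h]
  rw [Summable.tsum_add (((summable1 x).mul_left x)) ((Real.summable_pow_div_factorial x).mul_left x),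
    tsum_mul_left, tsum_mul_left, tsum1, exp_tsum]
  ring


-- finite sums over Icc 1 n as tsum with shift
lemma sum_Icc_one {M : Type*} [AddCommMonoid M] (f : ℕ → M) (n : ℕ) :
    ∑ i ∈ Finset.Icc 1 n, f i = ∑ i ∈ Finset.range n, f (i + 1) := by
  induction n with
  | zero => simp
  | succ n ih =>
    rw [Finset.sum_Icc_succ_top (by omega), ih, Finset.sum_range_succ]

lemma sum_Icc_tsum (f : ℕ → ENNReal) (n : ℕ) :
    ∑ i ∈ Finset.Icc 1 n, f i = ∑' i : ℕ, if i < n then f (i + 1) else 0 := by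
  rw [sum_Icc_one, tsum_eq_sum (s := Finset.range n) (fun b hb => by
    rw [if_neg]; simpa using hb)]
  exact Finset.sum_congr rfl fun i hi => by rw [if_pos (Finset.mem_range.mp hi)]

lemma tsum_lt_nat (n : ℕ) : ∑' i : ℕ, (if i < n then (1 : ENNReal) else 0) = n := by
  rw [tsum_eq_sum (s := Finset.range n) (fun b hb => by rw [if_neg]; simpa using hb)]
  rw [Finset.sum_congr rfl (fun i hi => if_pos (Finset.mem_range.mp hi))]
  simp

-- lintegral of a function of an ℕ-valued rv
lemma lintegral_nat {Ω : Type*} [MeasurableSpace Ω] (P : Measure Ω)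
    (N : Ω → ℕ) (hN : Measurable N) (f : ℕ → ENNReal) :
    ∫⁻ ω, f (N ω) ∂P = ∑' n : ℕ, f n * P {ω | N ω = n} := by
  rw [← lintegral_map (f := f) (measurable_from_top) hN, lintegral_countable']
  congr 1
  ext n
  rw [Measure.map_apply hN (MeasurableSet.singleton n)]
  rfl


-- first and second moment of a Poisson variable
lemma pois_moment {Ω : Type*} [MeasurableSpace Ω] (P : Measure Ω)
    (μ : ℝ) (hμ0 : 0 < μ) (N : Ω → ℕ) (hN : Measurable N)
    (hp : ∀ n, P {ω | N ω = n} = ENNReal.ofReal (Real.exp (-μ) * μ ^ n / n.factorial)) :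
    ∫⁻ ω, (N ω : ENNReal) ∂P = ENNReal.ofReal μ ∧
    ∫⁻ ω, (N ω : ENNReal)^2 ∂P = ENNReal.ofReal (μ + μ^2) := by
  have key : ∀ (g : ℕ → ℝ), (∀ n, 0 ≤ g n) → Summable (fun n => g n * μ ^ n / n.factorial) →
      ∑' n : ℕ, ENNReal.ofReal (g n) * P {ω | N ω = n}
        = ENNReal.ofReal (Real.exp (-μ) * ∑' n : ℕ, g n * μ ^ n / n.factorial) := by
    intro g hg hsum
    have h1 : ∀ n : ℕ, ENNReal.ofReal (g n) * P {ω | N ω = n}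
        = ENNReal.ofReal (Real.exp (-μ) * (g n * μ ^ n / n.factorial)) := by
      intro n
      rw [hp n, ← ENNReal.ofReal_mul (hg n)]
      congr 1
      rw [div_eq_mul_inv, div_eq_mul_inv]
      ring
    simp_rw [h1]
    rw [← ENNReal.ofReal_tsum_of_nonneg (fun n => mul_nonneg (Real.exp_nonneg _)
      (div_nonneg (mul_nonneg (hg n) (pow_nonneg hμ0.le n)) (Nat.cast_nonneg _)))
      (hsum.mul_left _),
      tsum_mul_left]
  constructor
  · have : ∫⁻ ω, (N ω : ENNReal) ∂P = ∑' n : ℕ, ENNReal.ofReal (n : ℝ) * P {ω | N ω = n} := by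
      rw [lintegral_nat P N hN (fun n => (n : ENNReal))]
      simp [ENNReal.ofReal_natCast]
    rw [this, key _ (fun n => Nat.cast_nonneg n) (summable1 μ), tsum1]
    congr 1
    rw [show Real.exp (-μ) * (μ * Real.exp μ) = μ * (Real.exp (-μ) * Real.exp μ) by ring,
      ← Real.exp_add]
    simp
  · have : ∫⁻ ω, (N ω : ENNReal)^2 ∂P = ∑' n : ℕ, ENNReal.ofReal ((n : ℝ)^2) * P {ω | N ω = n} := by
      rw [lintegral_nat P N hN (fun n => (n : ENNReal)^2)]
      congr 1; ext n
      rw [ENNReal.ofReal_pow (Nat.cast_nonneg n), ENNReal.ofReal_natCast]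
    rw [this, key _ (fun n => by positivity) (summable2 μ), tsum2]
    congr 1
    rw [show Real.exp (-μ) * ((μ + μ^2) * Real.exp μ) = (μ + μ^2) * (Real.exp (-μ) * Real.exp μ)
      by ring, ← Real.exp_add]
    simp


section core
variable {Ω : Type*} [mΩ : MeasurableSpace Ω]

-- the sigma algebra generated by ξ rows < m
noncomputable def G (ξ : ℕ → ℕ → Ω → ℕ) (m : ℕ) : MeasurableSpace Ω :=
  ⨆ p ∈ {p : ℕ × ℕ | p.1 < m}, MeasurableSpace.comap (fun ω => ξ p.1 p.2 ω) inferInstance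

lemma G_le (ξ : ℕ → ℕ → Ω → ℕ) (hmeas : ∀ k i, Measurable (ξ k i)) (m : ℕ) : G ξ m ≤ mΩ :=
  iSup₂_le fun p _ => (hmeas p.1 p.2).comap_le

lemma G_mono (ξ : ℕ → ℕ → Ω → ℕ) {m m' : ℕ} (h : m ≤ m') : G ξ m ≤ G ξ m' := by
  refine iSup₂_le fun p hp => ?_
  exact le_iSup₂ (f := fun p (_ : p ∈ {p : ℕ × ℕ | p.1 < m'}) =>
    MeasurableSpace.comap (fun ω => ξ p.1 p.2 ω) inferInstance) p (lt_of_lt_of_le hp h)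

lemma xi_meas_G (ξ : ℕ → ℕ → Ω → ℕ) {m k i : ℕ} (h : k < m) : Measurable[G ξ m] (ξ k i) := by
  refine Measurable.mono (Measurable.of_comap_le le_rfl) ?_ le_rfl
  exact le_iSup₂ (f := fun p (_ : p ∈ {p : ℕ × ℕ | p.1 < m}) =>
    MeasurableSpace.comap (fun ω => ξ p.1 p.2 ω) inferInstance) (k, i) h

lemma Z_meas_G (ξ : ℕ → ℕ → Ω → ℕ) (Z : ℕ → Ω → ℕ)
    (hZ0 : ∀ ω, Z 0 ω = 1)
    (hZrec : ∀ k ω, Z (k + 1) ω = ∑ i ∈ Finset.Icc 1 (Z k ω), ξ k i ω) :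
    ∀ m, Measurable[G ξ m] (Z m) := by
  intro m
  induction m with
  | zero =>
    have : Z 0 = fun _ => 1 := funext hZ0
    rw [this]; exact measurable_const
  | succ m ih =>
    have hF : Measurable[(G ξ (m+1)).prod ⊤] (fun q : Ω × ℕ => ∑ i ∈ Finset.Icc 1 q.2, ξ m i q.1) := by
      apply measurable_from_prod_countable_left (β := ℕ)
      intro n
      simp only
      exact Finset.measurable_sum _ (fun i _ => xi_meas_G ξ (Nat.lt_succ_self m))
    have : Z (m+1) = (fun q : Ω × ℕ => ∑ i ∈ Finset.Icc 1 q.2, ξ m i q.1)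
        ∘ (fun ω => (ω, Z m ω)) := by
      funext ω; simp [hZrec m ω]
    rw [this]
    exact hF.comp (Measurable.prodMk measurable_id
      (Measurable.mono ih (G_mono ξ (Nat.le_succ m)) le_rfl))

lemma indep_G_xi (P : Measure Ω) (ξ : ℕ → ℕ → Ω → ℕ) (hmeas : ∀ k i, Measurable (ξ k i))
    (hindep : iIndepFun (fun p : ℕ × ℕ => ξ p.1 p.2) P)
    (m i : ℕ) :
    Indep (G ξ m) (MeasurableSpace.comap (ξ m i) inferInstance) P := by
  have h := indep_iSup_of_disjoint (m := fun p : ℕ × ℕ =>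
      MeasurableSpace.comap (fun ω => ξ p.1 p.2 ω) inferInstance)
    (fun p => (hmeas p.1 p.2).comap_le) hindep
    (S := {p : ℕ × ℕ | p.1 < m}) (T := {(m, i)})
    (by
      rw [Set.disjoint_left]
      rintro ⟨a, b⟩ ha hb
      simp only [Set.mem_singleton_iff, Prod.mk.injEq] at hb
      simp only [Set.mem_setOf_eq] at ha
      omega)
  simpa [G] using h

lemma indep_G_sup_xi (P : Measure Ω) (ξ : ℕ → ℕ → Ω → ℕ) (hmeas : ∀ k i, Measurable (ξ k i))
    (hindep : iIndepFun (fun p : ℕ × ℕ => ξ p.1 p.2) P)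
    (m i j : ℕ) (hij : i ≠ j) :
    Indep (G ξ m ⊔ MeasurableSpace.comap (ξ m i) inferInstance)
      (MeasurableSpace.comap (ξ m j) inferInstance) P := by
  have h := indep_iSup_of_disjoint (m := fun p : ℕ × ℕ =>
      MeasurableSpace.comap (fun ω => ξ p.1 p.2 ω) inferInstance)
    (fun p => (hmeas p.1 p.2).comap_le) hindep
    (S := {p : ℕ × ℕ | p.1 < m} ∪ {(m, i)}) (T := {(m, j)})
    (by
      rw [Set.disjoint_left]
      rintro ⟨a, b⟩ ha hb
      simp only [Set.mem_singleton_iff, Prod.mk.injEq] at hb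
      simp only [Set.mem_union, Set.mem_setOf_eq, Set.mem_singleton_iff, Prod.mk.injEq] at ha
      rcases ha with h1 | h1
      · omega
      · exact hij (by omega))
  rw [iSup_union] at h
  simpa [G] using h

lemma Z_meas (ξ : ℕ → ℕ → Ω → ℕ) (hmeas : ∀ k i, Measurable (ξ k i))
    (Z : ℕ → Ω → ℕ)
    (hZ0 : ∀ ω, Z 0 ω = 1)
    (hZrec : ∀ k ω, Z (k + 1) ω = ∑ i ∈ Finset.Icc 1 (Z k ω), ξ k i ω) :
    ∀ m, Measurable (Z m) :=
  fun m => (Z_meas_G ξ Z hZ0 hZrec m).mono (G_le ξ hmeas m) le_rfl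

end core


section core2
variable {Ω : Type*} [mΩ : MeasurableSpace Ω]

-- the indicator of {i < Z m}
noncomputable def indZ (Z : ℕ → Ω → ℕ) (m i : ℕ) : Ω → ENNReal :=
  fun ω => if i < Z m ω then 1 else 0

lemma indZ_meas (ξ : ℕ → ℕ → Ω → ℕ) (Z : ℕ → Ω → ℕ)
    (hZ0 : ∀ ω, Z 0 ω = 1)
    (hZrec : ∀ k ω, Z (k + 1) ω = ∑ i ∈ Finset.Icc 1 (Z k ω), ξ k i ω)
    (m i : ℕ) : Measurable[G ξ m] (indZ Z m i) := by
  apply Measurable.ite _ measurable_const measurable_const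
  exact (Z_meas_G ξ Z hZ0 hZrec m) (measurableSet_Ioi (a := i))

lemma indZ_tsum (Z : ℕ → Ω → ℕ) (m : ℕ) (ω : Ω) :
    ∑' i : ℕ, indZ Z m i ω = (Z m ω : ENNReal) := tsum_lt_nat (Z m ω)

-- cast of Z (m+1) as a tsum
lemma Zsucc_tsum (ξ : ℕ → ℕ → Ω → ℕ) (Z : ℕ → Ω → ℕ)
    (hZrec : ∀ k ω, Z (k + 1) ω = ∑ i ∈ Finset.Icc 1 (Z k ω), ξ k i ω)
    (m : ℕ) (ω : Ω) :
    ((Z (m+1) ω : ℕ) : ENNReal) = ∑' i : ℕ, indZ Z m i ω * (ξ m (i+1) ω : ENNReal) := by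
  rw [hZrec m ω, Nat.cast_sum, sum_Icc_tsum (fun i => ((ξ m i ω : ℕ) : ENNReal)) (Z m ω)]
  congr 1; ext i
  by_cases h : i < Z m ω <;> simp [indZ, h]

section moments
variable (P : Measure Ω) [IsProbabilityMeasure P]
    (μ : ℝ) (hμ0 : 0 < μ) (hμ1 : μ < 1)
    (ξ : ℕ → ℕ → Ω → ℕ)
    (hmeas : ∀ k i, Measurable (ξ k i))
    (hindep : iIndepFun (fun p : ℕ × ℕ => ξ p.1 p.2) P)
    (hpois : ∀ k i n, P {ω | ξ k i ω = n}
      = ENNReal.ofReal (Real.exp (-μ) * μ ^ n / n.factorial))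
    (Z : ℕ → Ω → ℕ)
    (hZ0 : ∀ ω, Z 0 ω = 1)
    (hZrec : ∀ k ω, Z (k + 1) ω = ∑ i ∈ Finset.Icc 1 (Z k ω), ξ k i ω)

include hμ0 hmeas hindep hpois hZ0 hZrec

set_option linter.unusedSectionVars false

-- key step: multiply a G-measurable weight by Z (m+1)
lemma step_mul (m : ℕ) (h : Ω → ENNReal) (hh : Measurable[G ξ m] h) :
    ∫⁻ ω, h ω * (Z (m+1) ω : ENNReal) ∂P
      = ENNReal.ofReal μ * ∫⁻ ω, h ω * (Z m ω : ENNReal) ∂P := by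
  have hGle := G_le ξ hmeas
  have hind := indZ_meas ξ Z hZ0 hZrec m
  have hxi : ∀ i, Measurable[MeasurableSpace.comap (ξ m i) inferInstance]
      (fun ω => ((ξ m i ω : ℕ) : ENNReal)) :=
    fun i => Measurable.comp measurable_from_top (Measurable.of_comap_le le_rfl)
  have key : ∀ i : ℕ, ∫⁻ ω, (h ω * indZ Z m i ω) * (ξ m (i+1) ω : ENNReal) ∂P
      = (∫⁻ ω, h ω * indZ Z m i ω ∂P) * ENNReal.ofReal μ := by
    intro i
    rw [lintegral_mul_eq_lintegral_mul_lintegral_of_independent_measurableSpace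
      (f := fun ω => h ω * indZ Z m i ω) (hGle m) ((hmeas m (i+1)).comap_le) (indep_G_xi P ξ hmeas hindep m (i+1))
      (hh.mul (hind i)) (hxi (i+1))]
    congr 1
    exact (pois_moment P μ hμ0 (ξ m (i+1)) (hmeas m (i+1)) (hpois m (i+1))).1
  calc ∫⁻ ω, h ω * (Z (m+1) ω : ENNReal) ∂P
      = ∫⁻ ω, ∑' i : ℕ, (h ω * indZ Z m i ω) * (ξ m (i+1) ω : ENNReal) ∂P := by
        congr 1; funext ω
        rw [Zsucc_tsum ξ Z hZrec m ω, ← ENNReal.tsum_mul_left]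
        exact tsum_congr fun i => (mul_assoc _ _ _).symm
    _ = ∑' i : ℕ, ∫⁻ ω, (h ω * indZ Z m i ω) * (ξ m (i+1) ω : ENNReal) ∂P := by
        apply lintegral_tsum
        intro i
        exact (((hh.mono (hGle m) le_rfl).mul
          ((hind i).mono (hGle m) le_rfl)).mul
          (measurable_from_top.comp (hmeas m (i+1)))).aemeasurable
    _ = ∑' i : ℕ, (∫⁻ ω, h ω * indZ Z m i ω ∂P) * ENNReal.ofReal μ := by
        congr 1; funext i; exact key i
    _ = ENNReal.ofReal μ * ∑' i : ℕ, ∫⁻ ω, h ω * indZ Z m i ω ∂P := by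
        rw [ENNReal.tsum_mul_right]; ring
    _ = ENNReal.ofReal μ * ∫⁻ ω, h ω * (Z m ω : ENNReal) ∂P := by
        congr 1
        rw [← lintegral_tsum (f := fun i ω => h ω * indZ Z m i ω) (fun i => ((hh.mono (hGle m) le_rfl).mul
          ((hind i).mono (hGle m) le_rfl)).aemeasurable)]
        congr 1; funext ω
        rw [ENNReal.tsum_mul_left, indZ_tsum]

-- first moment
lemma eZ : ∀ m, ∫⁻ ω, (Z m ω : ENNReal) ∂P = ENNReal.ofReal (μ ^ m) := by
  intro m
  induction m with
  | zero =>
    have : ∀ ω, ((Z 0 ω : ℕ) : ENNReal) = 1 := fun ω => by rw [hZ0 ω]; norm_num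
    simp [this]
  | succ m ih =>
    have h1 := step_mul P μ hμ0 ξ hmeas hindep hpois Z hZ0 hZrec m
      (fun _ => 1) measurable_const
    simp only [one_mul] at h1
    rw [h1, ih, pow_succ, ← ENNReal.ofReal_mul hμ0.le, mul_comm]

-- cross moments: E[Z n * Z (n+d)] = μ^d * E[Z n ^2]
lemma cZ (n : ℕ) : ∀ d : ℕ, ∫⁻ ω, (Z n ω : ENNReal) * (Z (n+d) ω : ENNReal) ∂P
    = ENNReal.ofReal (μ ^ d) * ∫⁻ ω, (Z n ω : ENNReal) * (Z n ω : ENNReal) ∂P := by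
  intro d
  induction d with
  | zero => simp
  | succ d ih =>
    have hZn : Measurable[G ξ (n+d)] (fun ω => ((Z n ω : ℕ) : ENNReal)) :=
      (measurable_from_top.comp (Z_meas_G ξ Z hZ0 hZrec n)).mono
        (G_mono ξ (Nat.le_add_right n d)) le_rfl
    have h1 := step_mul P μ hμ0 ξ hmeas hindep hpois Z hZ0 hZrec (n+d)
      (fun ω => ((Z n ω : ℕ) : ENNReal)) hZn
    rw [show n + (d+1) = (n+d) + 1 by omega, h1, ih, ← mul_assoc,
      pow_succ, ← ENNReal.ofReal_mul hμ0.le, mul_comm μ (μ ^ d)]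

-- second moment recursion
lemma qZ_rec (m : ℕ) :
    ∫⁻ ω, (Z (m+1) ω : ENNReal) * (Z (m+1) ω : ENNReal) ∂P
      = ENNReal.ofReal μ * ∫⁻ ω, (Z m ω : ENNReal) ∂P
        + ENNReal.ofReal μ * ENNReal.ofReal μ
            * ∫⁻ ω, (Z m ω : ENNReal) * (Z m ω : ENNReal) ∂P := by
  have hGle := G_le ξ hmeas
  have hind := indZ_meas ξ Z hZ0 hZrec m
  have hindm : ∀ i, Measurable (indZ Z m i) := fun i => (hind i).mono (hGle m) le_rfl
  have hxicomap : ∀ i, Measurable[MeasurableSpace.comap (ξ m i) inferInstance]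
      (fun ω => ((ξ m i ω : ℕ) : ENNReal)) :=
    fun i => Measurable.comp measurable_from_top (Measurable.of_comap_le le_rfl)
  have hxim : ∀ i, Measurable (fun ω => ((ξ m i ω : ℕ) : ENNReal)) :=
    fun i => measurable_from_top.comp (hmeas m i)
  have hmom := fun i => pois_moment P μ hμ0 (ξ m i) (hmeas m i) (hpois m i)
  -- the (i,j) term
  have term : ∀ i j : ℕ,
      ∫⁻ ω, (indZ Z m i ω * (ξ m (i+1) ω : ENNReal))
          * (indZ Z m j ω * (ξ m (j+1) ω : ENNReal)) ∂P
        = (∫⁻ ω, indZ Z m i ω * indZ Z m j ω ∂P) * (ENNReal.ofReal μ * ENNReal.ofReal μ)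
          + (if i = j then (∫⁻ ω, indZ Z m i ω ∂P) * ENNReal.ofReal μ else 0) := by
    intro i j
    by_cases hij : i = j
    · subst hij
      rw [if_pos rfl]
      have e1 : ∀ ω, (indZ Z m i ω * (ξ m (i+1) ω : ENNReal))
          * (indZ Z m i ω * (ξ m (i+1) ω : ENNReal))
          = indZ Z m i ω * ((ξ m (i+1) ω : ENNReal))^2 := by
        intro ω
        have : indZ Z m i ω * indZ Z m i ω = indZ Z m i ω := by
          unfold indZ; by_cases h : i < Z m ω <;> simp [h]
        calc (indZ Z m i ω * (ξ m (i+1) ω : ENNReal))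
          * (indZ Z m i ω * (ξ m (i+1) ω : ENNReal))
            = (indZ Z m i ω * indZ Z m i ω) * ((ξ m (i+1) ω : ENNReal))^2 := by ring
          _ = indZ Z m i ω * ((ξ m (i+1) ω : ENNReal))^2 := by rw [this]
      calc ∫⁻ ω, (indZ Z m i ω * (ξ m (i+1) ω : ENNReal))
          * (indZ Z m i ω * (ξ m (i+1) ω : ENNReal)) ∂P
          = ∫⁻ ω, indZ Z m i ω * ((ξ m (i+1) ω : ENNReal))^2 ∂P := by
            congr 1; funext ω; exact e1 ω
        _ = (∫⁻ ω, indZ Z m i ω ∂P) * ∫⁻ ω, ((ξ m (i+1) ω : ENNReal))^2 ∂P := by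
            exact lintegral_mul_eq_lintegral_mul_lintegral_of_independent_measurableSpace
              (hGle m) ((hmeas m (i+1)).comap_le) (indep_G_xi P ξ hmeas hindep m (i+1))
              (hind i) ((hxicomap (i+1)).pow_const 2)
        _ = (∫⁻ ω, indZ Z m i ω ∂P) * (ENNReal.ofReal μ * ENNReal.ofReal μ + ENNReal.ofReal μ) := by
            rw [(hmom (i+1)).2, ← ENNReal.ofReal_mul hμ0.le]
            congr 1
            rw [← ENNReal.ofReal_add (by positivity) hμ0.le]
            congr 1; ring
        _ = _ := by
            have h2 : ∫⁻ ω, indZ Z m i ω * indZ Z m i ω ∂P = ∫⁻ ω, indZ Z m i ω ∂P := by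
              congr 1; funext ω
              unfold indZ; by_cases h : i < Z m ω <;> simp [h]
            rw [h2]; ring
    · rw [if_neg hij]
      have hij1 : i + 1 ≠ j + 1 := by omega
      have hsup := indep_G_sup_xi P ξ hmeas hindep m (i+1) (j+1) hij1
      have hle1 : G ξ m ⊔ MeasurableSpace.comap (ξ m (i+1)) inferInstance ≤ mΩ :=
        sup_le (hGle m) ((hmeas m (i+1)).comap_le)
      have e1 : ∀ ω, (indZ Z m i ω * (ξ m (i+1) ω : ENNReal))
          * (indZ Z m j ω * (ξ m (j+1) ω : ENNReal))
          = ((indZ Z m i ω * indZ Z m j ω) * (ξ m (i+1) ω : ENNReal))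
            * (ξ m (j+1) ω : ENNReal) := by intro ω; ring
      have hf1 : Measurable[G ξ m ⊔ MeasurableSpace.comap (ξ m (i+1)) inferInstance]
          (fun ω => (indZ Z m i ω * indZ Z m j ω) * (ξ m (i+1) ω : ENNReal)) := by
        apply Measurable.mul
        · exact ((hind i).mul (hind j)).mono le_sup_left le_rfl
        · exact (hxicomap (i+1)).mono le_sup_right le_rfl
      calc ∫⁻ ω, (indZ Z m i ω * (ξ m (i+1) ω : ENNReal))
          * (indZ Z m j ω * (ξ m (j+1) ω : ENNReal)) ∂P
          = ∫⁻ ω, ((indZ Z m i ω * indZ Z m j ω) * (ξ m (i+1) ω : ENNReal))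
            * (ξ m (j+1) ω : ENNReal) ∂P := by
            congr 1; funext ω; exact e1 ω
        _ = (∫⁻ ω, (indZ Z m i ω * indZ Z m j ω) * (ξ m (i+1) ω : ENNReal) ∂P)
            * ENNReal.ofReal μ := by
            rw [lintegral_mul_eq_lintegral_mul_lintegral_of_independent_measurableSpace
              hle1 ((hmeas m (j+1)).comap_le) hsup hf1 (hxicomap (j+1)), (hmom (j+1)).1]
        _ = ((∫⁻ ω, indZ Z m i ω * indZ Z m j ω ∂P) * ENNReal.ofReal μ) * ENNReal.ofReal μ := by
            rw [lintegral_mul_eq_lintegral_mul_lintegral_of_independent_measurableSpace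
              (f := fun ω => indZ Z m i ω * indZ Z m j ω)
              (hGle m) ((hmeas m (i+1)).comap_le) (indep_G_xi P ξ hmeas hindep m (i+1))
              ((hind i).mul (hind j))
              (hxicomap (i+1)), (hmom (i+1)).1]
        _ = _ := by rw [add_zero]; ring
  -- expand the square as a double tsum
  have expand : ∀ ω, (Z (m+1) ω : ENNReal) * (Z (m+1) ω : ENNReal)
      = ∑' i : ℕ, ∑' j : ℕ, (indZ Z m i ω * (ξ m (i+1) ω : ENNReal))
          * (indZ Z m j ω * (ξ m (j+1) ω : ENNReal)) := by
    intro ω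
    rw [Zsucc_tsum ξ Z hZrec m ω, ← ENNReal.tsum_mul_right]
    exact tsum_congr fun i => by rw [← ENNReal.tsum_mul_left]
  have hmeasterm : ∀ i j : ℕ, Measurable (fun ω =>
      (indZ Z m i ω * (ξ m (i+1) ω : ENNReal))
        * (indZ Z m j ω * (ξ m (j+1) ω : ENNReal))) :=
    fun i j => ((hindm i).mul (hxim (i+1))).mul ((hindm j).mul (hxim (j+1)))
  -- the same expansion for Z m * Z m with indicators only
  have expand2 : ∫⁻ ω, (Z m ω : ENNReal) * (Z m ω : ENNReal) ∂P
      = ∑' i : ℕ, ∑' j : ℕ, ∫⁻ ω, indZ Z m i ω * indZ Z m j ω ∂P := by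
    have e : ∀ ω, (Z m ω : ENNReal) * (Z m ω : ENNReal)
        = ∑' i : ℕ, ∑' j : ℕ, indZ Z m i ω * indZ Z m j ω := by
      intro ω
      rw [← indZ_tsum Z m ω, ← ENNReal.tsum_mul_right]
      exact tsum_congr fun i => by rw [← ENNReal.tsum_mul_left]
    calc ∫⁻ ω, (Z m ω : ENNReal) * (Z m ω : ENNReal) ∂P
        = ∫⁻ ω, ∑' i : ℕ, ∑' j : ℕ, indZ Z m i ω * indZ Z m j ω ∂P := by
          congr 1; funext ω; exact e ω
      _ = ∑' i : ℕ, ∫⁻ ω, ∑' j : ℕ, indZ Z m i ω * indZ Z m j ω ∂P := by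
          exact lintegral_tsum fun i => (Measurable.ennreal_tsum
            (fun j => (hindm i).mul (hindm j))).aemeasurable
      _ = ∑' i : ℕ, ∑' j : ℕ, ∫⁻ ω, indZ Z m i ω * indZ Z m j ω ∂P := by
          exact tsum_congr fun i => lintegral_tsum fun j =>
            ((hindm i).mul (hindm j)).aemeasurable
  have expand1 : ∑' i : ℕ, ∫⁻ ω, indZ Z m i ω ∂P = ∫⁻ ω, (Z m ω : ENNReal) ∂P := by
    rw [← lintegral_tsum fun i => (hindm i).aemeasurable]
    congr 1; funext ω; exact indZ_tsum Z m ω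
  calc ∫⁻ ω, (Z (m+1) ω : ENNReal) * (Z (m+1) ω : ENNReal) ∂P
      = ∑' i : ℕ, ∑' j : ℕ, ∫⁻ ω, (indZ Z m i ω * (ξ m (i+1) ω : ENNReal))
          * (indZ Z m j ω * (ξ m (j+1) ω : ENNReal)) ∂P := by
        rw [show (fun ω => (Z (m+1) ω : ENNReal) * (Z (m+1) ω : ENNReal))
          = fun ω => ∑' i : ℕ, ∑' j : ℕ, (indZ Z m i ω * (ξ m (i+1) ω : ENNReal))
          * (indZ Z m j ω * (ξ m (j+1) ω : ENNReal)) from funext expand]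
        rw [lintegral_tsum fun i => (Measurable.ennreal_tsum
          (fun j => hmeasterm i j)).aemeasurable]
        exact tsum_congr fun i => lintegral_tsum fun j => (hmeasterm i j).aemeasurable
    _ = ∑' i : ℕ, ∑' j : ℕ, ((∫⁻ ω, indZ Z m i ω * indZ Z m j ω ∂P)
          * (ENNReal.ofReal μ * ENNReal.ofReal μ)
          + (if i = j then (∫⁻ ω, indZ Z m i ω ∂P) * ENNReal.ofReal μ else 0)) := by
        exact tsum_congr fun i => tsum_congr fun j => term i j
    _ = (∑' i : ℕ, ∑' j : ℕ, (∫⁻ ω, indZ Z m i ω * indZ Z m j ω ∂P))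
          * (ENNReal.ofReal μ * ENNReal.ofReal μ)
          + (∑' i : ℕ, (∫⁻ ω, indZ Z m i ω ∂P)) * ENNReal.ofReal μ := by
        rw [← ENNReal.tsum_mul_right, ← ENNReal.tsum_mul_right, ← ENNReal.tsum_add]
        refine tsum_congr fun i => ?_
        rw [ENNReal.tsum_add, ← ENNReal.tsum_mul_right]
        congr 1
        exact tsum_eq_single i (fun j hj => if_neg (Ne.symm hj)) |>.trans (if_pos rfl)
    _ = _ := by
        rw [← expand2, expand1]; ring

lemma qZ : ∀ m, ∫⁻ ω, (Z m ω : ENNReal) * (Z m ω : ENNReal) ∂P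
    = ENNReal.ofReal (μ ^ m * ∑ i ∈ Finset.range (m+1), μ ^ i) := by
  intro m
  induction m with
  | zero =>
    have : ∀ ω, ((Z 0 ω : ℕ) : ENNReal) = 1 := fun ω => by rw [hZ0 ω]; norm_num
    simp [this]
  | succ m ih =>
    rw [qZ_rec P μ hμ0 ξ hmeas hindep hpois Z hZ0 hZrec m,
      eZ P μ hμ0 ξ hmeas hindep hpois Z hZ0 hZrec m, ih,
      ← ENNReal.ofReal_mul hμ0.le, ← ENNReal.ofReal_mul hμ0.le,
      ← ENNReal.ofReal_mul (mul_nonneg hμ0.le hμ0.le),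
      ← ENNReal.ofReal_add (by positivity) (by positivity)]
    congr 1
    rw [geom_sum_succ (x := μ) (n := m+1)]
    ring

-- joint moment
lemma jointZ (k l : ℕ) : ∫⁻ ω, (Z k ω : ENNReal) * (Z l ω : ENNReal) ∂P
    = ENNReal.ofReal (μ ^ (max k l) * ∑ i ∈ Finset.range (min k l + 1), μ ^ i) := by
  rcases le_total k l with h | h
  · obtain ⟨d, rfl⟩ := Nat.exists_eq_add_of_le h
    rw [cZ P μ hμ0 ξ hmeas hindep hpois Z hZ0 hZrec k d,
      qZ P μ hμ0 ξ hmeas hindep hpois Z hZ0 hZrec k,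
      ← ENNReal.ofReal_mul (by positivity)]
    congr 1
    rw [max_eq_right h, min_eq_left h]
    ring
  · obtain ⟨d, rfl⟩ := Nat.exists_eq_add_of_le h
    have comm : ∀ ω, (Z (l+d) ω : ENNReal) * (Z l ω : ENNReal)
        = (Z l ω : ENNReal) * (Z (l+d) ω : ENNReal) := fun ω => mul_comm _ _
    rw [show (fun ω => (Z (l+d) ω : ENNReal) * (Z l ω : ENNReal))
      = fun ω => (Z l ω : ENNReal) * (Z (l+d) ω : ENNReal) from funext comm]
    rw [cZ P μ hμ0 ξ hmeas hindep hpois Z hZ0 hZrec l d,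
      qZ P μ hμ0 ξ hmeas hindep hpois Z hZ0 hZrec l,
      ← ENNReal.ofReal_mul (by positivity)]
    congr 1
    rw [max_eq_left h, min_eq_right h]
    ring

end moments
end core2


noncomputable def Phi : ℕ → ((ℕ × ℕ) → ℕ) → ℕ
  | 0 => fun _ => 1
  | (k+1) => fun g => ∑ i ∈ Finset.Icc 1 (Phi k g), g (k, i)

lemma Phi_meas : ∀ k, Measurable (Phi k) := by
  intro k
  induction k with
  | zero => exact measurable_const
  | succ k ih =>
    have hF : Measurable (fun q : ((ℕ × ℕ) → ℕ) × ℕ => ∑ i ∈ Finset.Icc 1 q.2, q.1 (k, i)) := by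
      apply measurable_from_prod_countable_left (β := ℕ)
      intro n
      simp only
      exact Finset.measurable_sum _ (fun i _ => measurable_pi_apply (k, i))
    have : Phi (k+1) = (fun q : ((ℕ × ℕ) → ℕ) × ℕ => ∑ i ∈ Finset.Icc 1 q.2, q.1 (k, i))
        ∘ (fun g => (g, Phi k g)) := by
      funext g; simp [Phi]
    rw [this]
    exact hF.comp (measurable_id.prodMk ih)

lemma Z_eq_Phi {Ω : Type*} (ξ : ℕ → ℕ → Ω → ℕ) (Z : ℕ → Ω → ℕ)
    (hZ0 : ∀ ω, Z 0 ω = 1)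
    (hZrec : ∀ k ω, Z (k + 1) ω = ∑ i ∈ Finset.Icc 1 (Z k ω), ξ k i ω) :
    ∀ m ω, Z m ω = Phi m (fun q => ξ q.1 q.2 ω) := by
  intro m
  induction m with
  | zero => intro ω; rw [hZ0 ω]; rfl
  | succ m ih =>
    intro ω
    rw [hZrec m ω, show Phi (m+1) (fun q => ξ q.1 q.2 ω)
      = ∑ i ∈ Finset.Icc 1 (Phi m (fun q => ξ q.1 q.2 ω)), ξ m i ω from rfl, ← ih ω]

-- independence of S j' and the pair (Z k, Z l)
lemma indep_S_ZZ {Ω : Type*} [MeasurableSpace Ω] (P : Measure Ω) [IsProbabilityMeasure P]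
    (ξ : ℕ → ℕ → Ω → ℕ) (Z : ℕ → Ω → ℕ)
    (hZ0 : ∀ ω, Z 0 ω = 1)
    (hZrec : ∀ k ω, Z (k + 1) ω = ∑ i ∈ Finset.Icc 1 (Z k ω), ξ k i ω)
    (T S : ℕ → Ω → ℝ)
    (hindepTS : IndepFun (fun ω => (fun q : ℕ × ℕ => (T q.1 ω, S q.2 ω)))
      (fun ω => (fun q : ℕ × ℕ => ξ q.1 q.2 ω)) P)
    (k l j' : ℕ) (Bs : Set ℝ) (hBs : MeasurableSet Bs) (Bn : Set (ℕ × ℕ)) :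
    P ({ω | S j' ω ∈ Bs} ∩ {ω | (Z k ω, Z l ω) ∈ Bn})
      = P {ω | S j' ω ∈ Bs} * P {ω | (Z k ω, Z l ω) ∈ Bn} := by
  have hφ : Measurable (fun g : (ℕ × ℕ) → ℝ × ℝ => (g (0, j')).2) :=
    measurable_snd.comp (measurable_pi_apply (0, j'))
  have hψ : Measurable (fun g : (ℕ × ℕ) → ℕ => (Phi k g, Phi l g)) :=
    (Phi_meas k).prodMk (Phi_meas l)
  have h := hindepTS.comp hφ hψ
  have hfun : (fun g : (ℕ × ℕ) → ℕ => (Phi k g, Phi l g))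
      ∘ (fun ω => (fun q : ℕ × ℕ => ξ q.1 q.2 ω)) = fun ω => (Z k ω, Z l ω) := by
    funext ω
    simp only [Function.comp]
    rw [← Z_eq_Phi ξ Z hZ0 hZrec k ω, ← Z_eq_Phi ξ Z hZ0 hZrec l ω]
  have hfun2 : (fun g : (ℕ × ℕ) → ℝ × ℝ => (g (0, j')).2)
      ∘ (fun ω => (fun q : ℕ × ℕ => (T q.1 ω, S q.2 ω))) = S j' := rfl
  rw [hfun, hfun2] at h
  have := h.measure_inter_preimage_eq_mul Bs Bn hBs
    ((Set.to_countable Bn).measurableSet)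
  exact this




/-- Per-generation covariance bound for a Hawkes cluster: with `(Z_k)` a Galton–Watson
process with Poisson(μ) offspring (`0 < μ < 1`), arrival times `(T_i)`, `(S_j)` independent
of the offspring variables, the tail bound `ℙ(S_j ≥ t+r) ≤ l^{1+δ} ν / (t+r)^{1+δ}`, and
positive quadrant dependence of `(Z_k, Z_l)`, one has
`|Cov(Σ_{i=1}^{Z_k} 1_{T_i ∈ (s,t]}, Σ_{j=1}^{Z_l} 1_{S_j ∈ (t+r,u]})|
  ≤ 2 l^{1+δ} ν / (t+r)^{1+δ} · μ^{max(k,l)} (1-μ^{min(k,l)+1})/(1-μ)`. -/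
theorem cluster_generation_cov_bound {Ω : Type*} [MeasurableSpace Ω]
    (P : Measure Ω) [IsProbabilityMeasure P]
    (μ : ℝ) (hμ0 : 0 < μ) (hμ1 : μ < 1)
    (ξ : ℕ → ℕ → Ω → ℕ)
    (hmeas : ∀ k i, Measurable (ξ k i))
    (hindep : iIndepFun
      (fun p : ℕ × ℕ => ξ p.1 p.2) P)
    (hpois : ∀ k i n, P {ω | ξ k i ω = n}
      = ENNReal.ofReal (Real.exp (-μ) * μ ^ n / n.factorial))
    (Z : ℕ → Ω → ℕ)
    (hZ0 : ∀ ω, Z 0 ω = 1)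
    (hZrec : ∀ k ω, Z (k + 1) ω = ∑ i ∈ Finset.Icc 1 (Z k ω), ξ k i ω)
    (k l : ℕ) (δ ν : ℝ) (hδ : 0 < δ) (hν : 0 ≤ ν)
    (s t r u : ℝ) (hst : s < t) (hr : 0 < r) (htu : t + r < u) (htr : 0 < t + r)
    (T S : ℕ → Ω → ℝ)
    (hT : ∀ i, Measurable (T i)) (hS : ∀ j, Measurable (S j))
    (hindepTS : IndepFun (fun ω => (fun q : ℕ × ℕ => (T q.1 ω, S q.2 ω)))
      (fun ω => (fun q : ℕ × ℕ => ξ q.1 q.2 ω)) P)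
    (hStail : ∀ j : ℕ, 1 ≤ j →
      P {ω | t + r ≤ S j ω} ≤ ENNReal.ofReal ((l : ℝ) ^ (1 + δ) * ν / (t + r) ^ (1 + δ)))
    (hpqd : ∀ i j : ℕ, 1 ≤ i → 1 ≤ j →
      P {ω | i ≤ Z k ω} * P {ω | j ≤ Z l ω} ≤ P {ω | i ≤ Z k ω ∧ j ≤ Z l ω}) :
    |(∫ ω, (∑ i ∈ Finset.Icc 1 (Z k ω), (Set.Ioc s t).indicator (fun _ => (1 : ℝ)) (T i ω))
          * (∑ j ∈ Finset.Icc 1 (Z l ω),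
              (Set.Ioc (t + r) u).indicator (fun _ => (1 : ℝ)) (S j ω)) ∂P)
        - (∫ ω, ∑ i ∈ Finset.Icc 1 (Z k ω),
              (Set.Ioc s t).indicator (fun _ => (1 : ℝ)) (T i ω) ∂P)
          * (∫ ω, ∑ j ∈ Finset.Icc 1 (Z l ω),
              (Set.Ioc (t + r) u).indicator (fun _ => (1 : ℝ)) (S j ω) ∂P)|
      ≤ 2 * ((l : ℝ) ^ (1 + δ) * ν / (t + r) ^ (1 + δ)) * μ ^ max k l
          * ((1 - μ ^ (min k l + 1)) / (1 - μ)) := by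
  classical
  have hZm := Z_meas ξ hmeas Z hZ0 hZrec
  -- notation
  set C : ℝ := (l : ℝ) ^ (1 + δ) * ν / (t + r) ^ (1 + δ) with hCdef
  have hC : 0 ≤ C := div_nonneg (mul_nonneg (Real.rpow_nonneg (Nat.cast_nonneg l) _) hν)
    (Real.rpow_nonneg htr.le _)
  set Sg : ℝ := ∑ i ∈ Finset.range (min k l + 1), μ ^ i with hSgdef
  set R : ℝ := μ ^ (max k l) * Sg with hRdef
  have hSg : 0 ≤ Sg := Finset.sum_nonneg fun i _ => pow_nonneg hμ0.le i
  have hR : 0 ≤ R := mul_nonneg (pow_nonneg hμ0.le _) hSg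
  have hJoint : ∫⁻ ω, (Z k ω : ENNReal) * (Z l ω : ENNReal) ∂P = ENNReal.ofReal R :=
    jointZ P μ hμ0 ξ hmeas hindep hpois Z hZ0 hZrec k l
  set X : Ω → ℝ := fun ω => ∑ i ∈ Finset.Icc 1 (Z k ω),
    (Set.Ioc s t).indicator (fun _ => (1 : ℝ)) (T i ω) with hXdef
  set Y : Ω → ℝ := fun ω => ∑ j ∈ Finset.Icc 1 (Z l ω),
    (Set.Ioc (t + r) u).indicator (fun _ => (1 : ℝ)) (S j ω) with hYdef
  -- measurability of X and Y
  have measX : Measurable X := by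
    have hF : Measurable (fun q : Ω × ℕ => ∑ i ∈ Finset.Icc 1 q.2,
        (Set.Ioc s t).indicator (fun _ => (1 : ℝ)) (T i q.1)) := by
      apply measurable_from_prod_countable_left (β := ℕ)
      intro n
      simp only
      exact Finset.measurable_sum _ (fun i _ =>
        (measurable_const.indicator measurableSet_Ioc).comp (hT i))
    exact hF.comp (measurable_id.prodMk (hZm k))
  have measY : Measurable Y := by
    have hF : Measurable (fun q : Ω × ℕ => ∑ j ∈ Finset.Icc 1 q.2,
        (Set.Ioc (t + r) u).indicator (fun _ => (1 : ℝ)) (S j q.1)) := by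
      apply measurable_from_prod_countable_left (β := ℕ)
      intro n
      simp only
      exact Finset.measurable_sum _ (fun j _ =>
        (measurable_const.indicator measurableSet_Ioc).comp (hS j))
    exact hF.comp (measurable_id.prodMk (hZm l))
  -- pointwise bounds
  have hind01 : ∀ (A : Set ℝ) (x : ℝ), 0 ≤ A.indicator (fun _ => (1:ℝ)) x ∧
      A.indicator (fun _ => (1:ℝ)) x ≤ 1 := by
    intro A x
    by_cases h : x ∈ A <;> simp [Set.indicator_apply, h]
  have hX0 : ∀ ω, 0 ≤ X ω := fun ω =>
    Finset.sum_nonneg fun i _ => (hind01 _ _).1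
  have hY0 : ∀ ω, 0 ≤ Y ω := fun ω =>
    Finset.sum_nonneg fun j _ => (hind01 _ _).1
  have hXle : ∀ ω, X ω ≤ (Z k ω : ℝ) := by
    intro ω
    calc X ω ≤ ∑ i ∈ Finset.Icc 1 (Z k ω), (1:ℝ) :=
        Finset.sum_le_sum fun i _ => (hind01 _ _).2
      _ = (Z k ω : ℝ) := by simp [Nat.card_Icc]
  have hYle : ∀ ω, Y ω ≤ (Z l ω : ℝ) := by
    intro ω
    calc Y ω ≤ ∑ j ∈ Finset.Icc 1 (Z l ω), (1:ℝ) :=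
        Finset.sum_le_sum fun j _ => (hind01 _ _).2
      _ = (Z l ω : ℝ) := by simp [Nat.card_Icc]
  -- ENNReal expansion of Y
  set e : ℕ → Ω → ENNReal := fun j ω =>
    ENNReal.ofReal ((Set.Ioc (t + r) u).indicator (fun _ => (1 : ℝ)) (S j ω)) with hedef
  have he_meas : ∀ j, Measurable (e j) := fun j =>
    ENNReal.measurable_ofReal.comp ((measurable_const.indicator measurableSet_Ioc).comp (hS j))
  have he01 : ∀ j ω, e j ω = if S j ω ∈ Set.Ioc (t+r) u then 1 else 0 := by
    intro j ω
    rw [hedef]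
    simp only [Set.indicator_apply]
    split_ifs <;> simp
  have hYexp : ∀ ω, ENNReal.ofReal (Y ω) = ∑' j : ℕ, indZ Z l j ω * e (j+1) ω := by
    intro ω
    rw [hYdef]
    simp only
    rw [ENNReal.ofReal_sum_of_nonneg (fun j _ => (hind01 _ _).1),
      sum_Icc_tsum (fun j => e j ω) (Z l ω)]
    exact tsum_congr fun j => by
      by_cases h : j < Z l ω <;> simp [indZ, h]
  have hXexpLe : ∀ ω, ENNReal.ofReal (X ω) ≤ (Z k ω : ENNReal) := by
    intro ω
    calc ENNReal.ofReal (X ω) ≤ ENNReal.ofReal ((Z k ω : ℝ)) :=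
        ENNReal.ofReal_le_ofReal (hXle ω)
      _ = (Z k ω : ENNReal) := ENNReal.ofReal_natCast _
  -- basic measurable sets and helper for lintegral of 0/1 functions
  have hindZm : ∀ (q i : ℕ), Measurable (indZ Z q i) := by
    intro q i
    apply Measurable.ite _ measurable_const measurable_const
    exact (hZm q) (measurableSet_Ioi (a := i))
  have hlin : ∀ (A : Set Ω), MeasurableSet A → ∀ (f : Ω → ENNReal),
      (∀ ω, f ω = if ω ∈ A then 1 else 0) → ∫⁻ ω, f ω ∂P = P A := by
    intro A hA f hf
    have : f = A.indicator (fun _ => (1 : ENNReal)) :=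
      funext fun ω => by rw [hf ω, Set.indicator_apply]
    rw [this, lintegral_indicator_const hA, one_mul]
  have hAmeas : ∀ j, MeasurableSet {ω | S j ω ∈ Set.Ioc (t+r) u} :=
    fun j => (hS j) measurableSet_Ioc
  have hBmeas : ∀ i j : ℕ, MeasurableSet {ω | i < Z k ω ∧ j < Z l ω} := by
    intro i j
    have : {ω | i < Z k ω ∧ j < Z l ω}
        = (Z k ⁻¹' Set.Ioi i) ∩ (Z l ⁻¹' Set.Ioi j) := by
      ext ω; simp [Set.mem_Ioi]
    rw [this]
    exact ((hZm k) measurableSet_Ioi).inter ((hZm l) measurableSet_Ioi)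
  have hBlmeas : ∀ j : ℕ, MeasurableSet {ω | j < Z l ω} :=
    fun j => (hZm l) (measurableSet_Ioi (a := j))
  -- tail probability bound
  have hPA : ∀ j : ℕ, P {ω | S (j+1) ω ∈ Set.Ioc (t+r) u} ≤ ENNReal.ofReal C := by
    intro j
    refine le_trans (measure_mono ?_) (hStail (j+1) (by omega))
    intro ω hω
    exact le_of_lt hω.1
  -- the key product term
  have hterm : ∀ i j : ℕ, ∫⁻ ω, indZ Z k i ω * (indZ Z l j ω * e (j+1) ω) ∂P
      = P {ω | S (j+1) ω ∈ Set.Ioc (t+r) u} * P {ω | i < Z k ω ∧ j < Z l ω} := by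
    intro i j
    have h1 : ∫⁻ ω, indZ Z k i ω * (indZ Z l j ω * e (j+1) ω) ∂P
        = P ({ω | S (j+1) ω ∈ Set.Ioc (t+r) u} ∩ {ω | i < Z k ω ∧ j < Z l ω}) := by
      apply hlin _ ((hAmeas (j+1)).inter (hBmeas i j))
      intro ω
      rw [he01]
      unfold indZ
      by_cases h1 : i < Z k ω <;> by_cases h2 : j < Z l ω <;>
        by_cases h3 : t + r < S (j+1) ω ∧ S (j+1) ω ≤ u <;>
        simp [h1, h2, h3, Set.mem_Ioc, Set.mem_inter_iff, Set.mem_setOf_eq]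
    rw [h1]
    exact indep_S_ZZ P ξ Z hZ0 hZrec T S hindepTS k l (j+1) _ measurableSet_Ioc
      {p : ℕ × ℕ | i < p.1 ∧ j < p.2}
  -- double sum of joint probabilities equals E[Z_k Z_l]
  have hPP : ∑' i : ℕ, ∑' j : ℕ, P {ω | i < Z k ω ∧ j < Z l ω} = ENNReal.ofReal R := by
    have h1 : ∀ i j : ℕ, P {ω | i < Z k ω ∧ j < Z l ω}
        = ∫⁻ ω, indZ Z k i ω * indZ Z l j ω ∂P := by
      intro i j
      symm
      apply hlin _ (hBmeas i j)
      intro ω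
      unfold indZ
      by_cases h1 : i < Z k ω <;> by_cases h2 : j < Z l ω <;>
        simp [h1, h2, Set.mem_setOf_eq]
    simp_rw [h1]
    rw [← hJoint]
    have epw : ∀ ω, (Z k ω : ENNReal) * (Z l ω : ENNReal)
        = ∑' i : ℕ, ∑' j : ℕ, indZ Z k i ω * indZ Z l j ω := by
      intro ω
      rw [← indZ_tsum Z k ω, ← indZ_tsum Z l ω, ← ENNReal.tsum_mul_right]
      exact tsum_congr fun i => by rw [← ENNReal.tsum_mul_left]
    calc ∑' i : ℕ, ∑' j : ℕ, ∫⁻ ω, indZ Z k i ω * indZ Z l j ω ∂P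
        = ∑' i : ℕ, ∫⁻ ω, ∑' j : ℕ, indZ Z k i ω * indZ Z l j ω ∂P :=
          tsum_congr fun i => (lintegral_tsum fun j =>
            ((hindZm k i).mul (hindZm l j)).aemeasurable).symm
      _ = ∫⁻ ω, ∑' i : ℕ, ∑' j : ℕ, indZ Z k i ω * indZ Z l j ω ∂P :=
          (lintegral_tsum fun i => (Measurable.ennreal_tsum fun j =>
            (hindZm k i).mul (hindZm l j)).aemeasurable).symm
      _ = ∫⁻ ω, (Z k ω : ENNReal) * (Z l ω : ENNReal) ∂P := by
          congr 1; funext ω; rw [← epw ω]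
  -- Upper bound for E[XY]
  have hU1 : ∫⁻ ω, ENNReal.ofReal (X ω * Y ω) ∂P ≤ ENNReal.ofReal C * ENNReal.ofReal R := by
    have hptwise : ∀ ω, ENNReal.ofReal (X ω * Y ω)
        ≤ ∑' i : ℕ, ∑' j : ℕ, indZ Z k i ω * (indZ Z l j ω * e (j+1) ω) := by
      intro ω
      rw [ENNReal.ofReal_mul (hX0 ω)]
      calc ENNReal.ofReal (X ω) * ENNReal.ofReal (Y ω)
          ≤ (Z k ω : ENNReal) * ENNReal.ofReal (Y ω) :=
            mul_le_mul_left (hXexpLe ω) _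
        _ = (∑' i : ℕ, indZ Z k i ω) * ∑' j : ℕ, indZ Z l j ω * e (j+1) ω := by
            rw [indZ_tsum, hYexp ω]
        _ = ∑' i : ℕ, ∑' j : ℕ, indZ Z k i ω * (indZ Z l j ω * e (j+1) ω) := by
            rw [← ENNReal.tsum_mul_right]
            exact tsum_congr fun i => by rw [← ENNReal.tsum_mul_left]
    calc ∫⁻ ω, ENNReal.ofReal (X ω * Y ω) ∂P
        ≤ ∫⁻ ω, ∑' i : ℕ, ∑' j : ℕ, indZ Z k i ω * (indZ Z l j ω * e (j+1) ω) ∂P :=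
          lintegral_mono hptwise
      _ = ∑' i : ℕ, ∑' j : ℕ, ∫⁻ ω, indZ Z k i ω * (indZ Z l j ω * e (j+1) ω) ∂P := by
          rw [lintegral_tsum (fun i => (Measurable.ennreal_tsum
            (f := fun j ω => indZ Z k i ω * (indZ Z l j ω * e (j+1) ω)) fun j =>
            (hindZm k i).mul ((hindZm l j).mul (he_meas (j+1)))).aemeasurable)]
          exact tsum_congr fun i => lintegral_tsum fun j =>
            ((hindZm k i).mul ((hindZm l j).mul (he_meas (j+1)))).aemeasurable
      _ ≤ ∑' i : ℕ, ∑' j : ℕ, ENNReal.ofReal C * P {ω | i < Z k ω ∧ j < Z l ω} := by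
          refine ENNReal.tsum_le_tsum fun i => ENNReal.tsum_le_tsum fun j => ?_
          rw [hterm i j]
          exact mul_le_mul_left (hPA j) _
      _ = ENNReal.ofReal C * ENNReal.ofReal R := by
          rw [← hPP]
          rw [← ENNReal.tsum_mul_left]
          exact tsum_congr fun i => by rw [← ENNReal.tsum_mul_left]
  -- Upper bounds for E[X], E[Y]
  have hU2X : ∫⁻ ω, ENNReal.ofReal (X ω) ∂P ≤ ∑' i : ℕ, P {ω | i < Z k ω} := by
    calc ∫⁻ ω, ENNReal.ofReal (X ω) ∂P ≤ ∫⁻ ω, (Z k ω : ENNReal) ∂P :=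
        lintegral_mono hXexpLe
      _ = ∫⁻ ω, ∑' i : ℕ, indZ Z k i ω ∂P := by
          congr 1; funext ω; rw [indZ_tsum]
      _ = ∑' i : ℕ, ∫⁻ ω, indZ Z k i ω ∂P :=
          lintegral_tsum fun i => (hindZm k i).aemeasurable
      _ = ∑' i : ℕ, P {ω | i < Z k ω} := by
          refine tsum_congr fun i => ?_
          apply hlin _ ((hZm k) (measurableSet_Ioi (a := i)))
          intro ω
          unfold indZ
          by_cases h1 : i < Z k ω <;> simp [h1, Set.mem_setOf_eq]
  have hU2Y : ∫⁻ ω, ENNReal.ofReal (Y ω) ∂P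
      ≤ ENNReal.ofReal C * ∑' j : ℕ, P {ω | j < Z l ω} := by
    have hterm2 : ∀ j : ℕ, ∫⁻ ω, indZ Z l j ω * e (j+1) ω ∂P
        = P {ω | S (j+1) ω ∈ Set.Ioc (t+r) u} * P {ω | j < Z l ω} := by
      intro j
      have h1 : ∫⁻ ω, indZ Z l j ω * e (j+1) ω ∂P
          = P ({ω | S (j+1) ω ∈ Set.Ioc (t+r) u} ∩ {ω | j < Z l ω}) := by
        apply hlin _ ((hAmeas (j+1)).inter (hBlmeas j))
        intro ω
        rw [he01]
        unfold indZ
        by_cases h2 : j < Z l ω <;> by_cases h3 : t + r < S (j+1) ω ∧ S (j+1) ω ≤ u <;>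
          simp [h2, h3, Set.mem_Ioc, Set.mem_inter_iff, Set.mem_setOf_eq]
      rw [h1]
      exact indep_S_ZZ P ξ Z hZ0 hZrec T S hindepTS k l (j+1) (Set.Ioc (t+r) u)
        measurableSet_Ioc {p : ℕ × ℕ | j < p.2}
    calc ∫⁻ ω, ENNReal.ofReal (Y ω) ∂P
        = ∫⁻ ω, ∑' j : ℕ, indZ Z l j ω * e (j+1) ω ∂P := by
          congr 1; funext ω; exact hYexp ω
      _ = ∑' j : ℕ, ∫⁻ ω, indZ Z l j ω * e (j+1) ω ∂P :=
          lintegral_tsum fun j => ((hindZm l j).mul (he_meas (j+1))).aemeasurable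
      _ ≤ ∑' j : ℕ, ENNReal.ofReal C * P {ω | j < Z l ω} := by
          refine ENNReal.tsum_le_tsum fun j => ?_
          rw [hterm2 j]
          exact mul_le_mul_left (hPA j) _
      _ = ENNReal.ofReal C * ∑' j : ℕ, P {ω | j < Z l ω} := ENNReal.tsum_mul_left
  have hU2 : (∫⁻ ω, ENNReal.ofReal (X ω) ∂P) * (∫⁻ ω, ENNReal.ofReal (Y ω) ∂P)
      ≤ ENNReal.ofReal C * ENNReal.ofReal R := by
    calc (∫⁻ ω, ENNReal.ofReal (X ω) ∂P) * (∫⁻ ω, ENNReal.ofReal (Y ω) ∂P)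
        ≤ (∑' i : ℕ, P {ω | i < Z k ω}) * (ENNReal.ofReal C * ∑' j : ℕ, P {ω | j < Z l ω}) :=
          mul_le_mul' hU2X hU2Y
      _ = ENNReal.ofReal C * ((∑' i : ℕ, P {ω | i < Z k ω}) * (∑' j : ℕ, P {ω | j < Z l ω})) := by
          ring
      _ = ENNReal.ofReal C * ∑' i : ℕ, ∑' j : ℕ, P {ω | i < Z k ω} * P {ω | j < Z l ω} := by
          congr 1
          rw [← ENNReal.tsum_mul_right]
          exact tsum_congr fun i => by rw [← ENNReal.tsum_mul_left]
      _ ≤ ENNReal.ofReal C * ∑' i : ℕ, ∑' j : ℕ, P {ω | i < Z k ω ∧ j < Z l ω} := by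
          refine mul_le_mul_right (ENNReal.tsum_le_tsum fun i =>
            ENNReal.tsum_le_tsum fun j => ?_) _
          exact hpqd (i+1) (j+1) (by omega) (by omega)
      _ = ENNReal.ofReal C * ENNReal.ofReal R := by rw [hPP]
  -- Integrability
  have hnormnat : ∀ (x : ℝ), 0 ≤ x → (‖x‖₊ : ENNReal) = ENNReal.ofReal x :=
    fun x hx => by rw [← Real.enorm_eq_ofReal hx]; rfl
  have intZZ : Integrable (fun ω => (Z k ω : ℝ) * (Z l ω : ℝ)) P := by
    constructor
    · exact ((measurable_from_top.comp (hZm k)).mul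
        (measurable_from_top.comp (hZm l)) : Measurable _).aestronglyMeasurable
    · rw [hasFiniteIntegral_def]
      have : ∀ ω, (‖(Z k ω : ℝ) * (Z l ω : ℝ)‖₊ : ENNReal)
          = (Z k ω : ENNReal) * (Z l ω : ENNReal) := by
        intro ω
        rw [hnormnat _ (mul_nonneg (Nat.cast_nonneg _) (Nat.cast_nonneg _)),
          ENNReal.ofReal_mul (Nat.cast_nonneg _), ENNReal.ofReal_natCast,
          ENNReal.ofReal_natCast]
      calc ∫⁻ ω, (‖(Z k ω : ℝ) * (Z l ω : ℝ)‖₊ : ENNReal) ∂P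
          = ∫⁻ ω, (Z k ω : ENNReal) * (Z l ω : ENNReal) ∂P := by
            congr 1; funext ω; exact this ω
        _ = ENNReal.ofReal R := hJoint
        _ < ⊤ := ENNReal.ofReal_lt_top
  have intZk : Integrable (fun ω => (Z k ω : ℝ)) P := by
    have h := jointZ P μ hμ0 ξ hmeas hindep hpois Z hZ0 hZrec k 0
    constructor
    · exact (measurable_from_top.comp (hZm k) : Measurable _).aestronglyMeasurable
    · rw [hasFiniteIntegral_def]
      have hone : ∀ ω, ((Z 0 ω : ℕ) : ENNReal) = 1 := fun ω => by rw [hZ0 ω]; norm_num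
      calc ∫⁻ ω, (‖(Z k ω : ℝ)‖₊ : ENNReal) ∂P
          = ∫⁻ ω, (Z k ω : ENNReal) * (Z 0 ω : ENNReal) ∂P := by
            congr 1; funext ω
            rw [hnormnat _ (Nat.cast_nonneg _), ENNReal.ofReal_natCast, hone ω, mul_one]
        _ < ⊤ := by rw [h]; exact ENNReal.ofReal_lt_top
  have intZl : Integrable (fun ω => (Z l ω : ℝ)) P := by
    have h := jointZ P μ hμ0 ξ hmeas hindep hpois Z hZ0 hZrec 0 l
    constructor
    · exact (measurable_from_top.comp (hZm l) : Measurable _).aestronglyMeasurable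
    · rw [hasFiniteIntegral_def]
      have hone : ∀ ω, ((Z 0 ω : ℕ) : ENNReal) = 1 := fun ω => by rw [hZ0 ω]; norm_num
      calc ∫⁻ ω, (‖(Z l ω : ℝ)‖₊ : ENNReal) ∂P
          = ∫⁻ ω, (Z 0 ω : ENNReal) * (Z l ω : ENNReal) ∂P := by
            congr 1; funext ω
            rw [hnormnat _ (Nat.cast_nonneg _), ENNReal.ofReal_natCast, hone ω, one_mul]
        _ < ⊤ := by rw [h]; exact ENNReal.ofReal_lt_top
  have intX : Integrable X P :=
    intZk.mono' measX.aestronglyMeasurable (ae_of_all _ fun ω => by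
      rw [Real.norm_eq_abs, abs_of_nonneg (hX0 ω)]; exact hXle ω)
  have intY : Integrable Y P :=
    intZl.mono' measY.aestronglyMeasurable (ae_of_all _ fun ω => by
      rw [Real.norm_eq_abs, abs_of_nonneg (hY0 ω)]; exact hYle ω)
  have intXY : Integrable (fun ω => X ω * Y ω) P :=
    intZZ.mono' (measX.mul measY).aestronglyMeasurable (ae_of_all _ fun ω => by
      rw [Real.norm_eq_abs, abs_of_nonneg (mul_nonneg (hX0 ω) (hY0 ω))]
      exact mul_le_mul (hXle ω) (hYle ω) (hY0 ω) (Nat.cast_nonneg _))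
  -- integral identities
  have hIX : ∫ ω, X ω ∂P = (∫⁻ ω, ENNReal.ofReal (X ω) ∂P).toReal :=
    integral_eq_lintegral_of_nonneg_ae (ae_of_all _ hX0) measX.aestronglyMeasurable
  have hIY : ∫ ω, Y ω ∂P = (∫⁻ ω, ENNReal.ofReal (Y ω) ∂P).toReal :=
    integral_eq_lintegral_of_nonneg_ae (ae_of_all _ hY0) measY.aestronglyMeasurable
  have hIXY : ∫ ω, X ω * Y ω ∂P = (∫⁻ ω, ENNReal.ofReal (X ω * Y ω) ∂P).toReal :=
    integral_eq_lintegral_of_nonneg_ae (ae_of_all _ fun ω => mul_nonneg (hX0 ω) (hY0 ω))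
      (measX.mul measY).aestronglyMeasurable
  -- final numeric bounds
  have hCR : ENNReal.ofReal C * ENNReal.ofReal R = ENNReal.ofReal (C * R) :=
    (ENNReal.ofReal_mul hC).symm
  have ha : ∫ ω, X ω * Y ω ∂P ≤ C * R := by
    rw [hIXY]
    exact ENNReal.toReal_le_of_le_ofReal (mul_nonneg hC hR) (by rw [← hCR]; exact hU1)
  have hb : (∫ ω, X ω ∂P) * (∫ ω, Y ω ∂P) ≤ C * R := by
    rw [hIX, hIY, ← ENNReal.toReal_mul]
    exact ENNReal.toReal_le_of_le_ofReal (mul_nonneg hC hR) (by rw [← hCR]; exact hU2)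
  have ha0 : 0 ≤ ∫ ω, X ω * Y ω ∂P :=
    integral_nonneg fun ω => mul_nonneg (hX0 ω) (hY0 ω)
  have hb0 : 0 ≤ (∫ ω, X ω ∂P) * (∫ ω, Y ω ∂P) :=
    mul_nonneg (integral_nonneg hX0) (integral_nonneg hY0)
  have hgeom : Sg = (1 - μ ^ (min k l + 1)) / (1 - μ) := by
    rw [hSgdef, geom_sum_eq (ne_of_lt hμ1) (min k l + 1)]
    rw [← neg_sub 1 (μ ^ (min k l + 1)), ← neg_sub 1 μ, neg_div_neg_eq]
  have hfinal : 2 * C * μ ^ max k l * ((1 - μ ^ (min k l + 1)) / (1 - μ)) = 2 * (C * R) := by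
    rw [hRdef, hgeom]; ring
  calc |(∫ ω, X ω * Y ω ∂P) - (∫ ω, X ω ∂P) * (∫ ω, Y ω ∂P)|
      ≤ |∫ ω, X ω * Y ω ∂P| + |(∫ ω, X ω ∂P) * (∫ ω, Y ω ∂P)| := abs_sub _ _
    _ = (∫ ω, X ω * Y ω ∂P) + (∫ ω, X ω ∂P) * (∫ ω, Y ω ∂P) := by
        rw [abs_of_nonneg ha0, abs_of_nonneg hb0]
    _ ≤ C * R + C * R := add_le_add ha hb
    _ = 2 * C * μ ^ max k l * ((1 - μ ^ (min k l + 1)) / (1 - μ)) := by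
        rw [hfinal]; ring
end
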